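/- arXiv:1803.05064 — 7 statements merged into one kernel-verified Lean document; each statement's English description precedes it below -/
import Mathlib

section
/- If G is a group and H is a finitely generated subgroup of G such that every element of H has only finitely many conjugates in G, then the centralizer of H in G has finite index in G. -/
universe u

/-- The conjugacy class of `g` in `G`. -/
def conjClassSet {G : Type u} [Group G] (g : G) : Set G := {h | ∃ x : G, x * g * x⁻¹ = h}

lemma conjClassSet_eq_orbit {G : Type u} [Group G] (g : G) :
    conjClassSet g = MulAction.orbit (ConjAct G) g := by
  ext y
  constructor
  · rintro ⟨x, rfl⟩
    exact ⟨ConjAct.toConjAct x, rfl⟩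
  · rintro ⟨c, rfl⟩
    exact ⟨ConjAct.ofConjAct c, rfl⟩

lemma centralizer_singleton_finiteIndex {G : Type u} [Group G] (g : G)
    (h : (conjClassSet g).Finite) : (Subgroup.centralizer {g}).FiniteIndex := by
  have horb : (MulAction.orbit (ConjAct G) g).Finite := by
    rw [← conjClassSet_eq_orbit]; exact h
  have hstab : (MulAction.stabilizer (ConjAct G) g).FiniteIndex := by
    constructor
    rw [MulAction.index_stabilizer]
    exact (Set.ncard_pos horb).mpr (MulAction.nonempty_orbit g) |>.ne'
  rw [Subgroup.centralizer_eq_comap_stabilizer]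
  constructor
  convert hstab.index_ne_zero using 1
  exact Subgroup.index_comap_of_surjective _ (MulEquiv.surjective _)

lemma centralizer_zpowers_finiteIndex {G : Type u} [Group G] (g : G)
    (h : (conjClassSet g).Finite) :
    (Subgroup.centralizer (Subgroup.zpowers g : Set G)).FiniteIndex := by
  have : Subgroup.centralizer (Subgroup.zpowers g : Set G) = Subgroup.centralizer {g} := by
    ext x
    simp only [Subgroup.mem_centralizer_iff]
    constructor
    · intro hx y hy
      rw [Set.mem_singleton_iff] at hy
      rw [hy]
      exact hx g (Subgroup.mem_zpowers g)
    · intro hx y hy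
      obtain ⟨n, rfl⟩ := hy
      have hc : Commute g x := hx g rfl
      exact (hc.zpow_left n)
  rw [this]
  exact centralizer_singleton_finiteIndex g h

/-- If H is a finitely generated subgroup of G all of whose elements have finitely many
conjugates in G, then the centralizer of H has finite index in G. -/
theorem fg_fc_subgroup_centralizer_finiteIndex (G : Type u) [Group G] (H : Subgroup G)
    (hfg : Group.FG H) (hFC : ∀ h ∈ H, (conjClassSet h).Finite) :
    (Subgroup.centralizer (H : Set G)).FiniteIndex := by
  have hfg' : H.FG := (Group.fg_iff_subgroup_fg H).mp hfg
  obtain ⟨S, hSc, hSfin⟩ := (Subgroup.fg_iff H).mp hfg'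
  rw [← hSc, Subgroup.centralizer_closure]
  have := hSfin.toFinset
  have key : Subgroup.centralizer (Subgroup.closure S : Set G) =
      ⨅ g ∈ hSfin.toFinset, Subgroup.centralizer (Subgroup.zpowers g : Set G) := by
    rw [Subgroup.centralizer_closure]
    congr 1
    ext g
    simp [Set.Finite.mem_toFinset]
    constructor
    · intro h i hi y hy
      obtain ⟨k, rfl⟩ := hy
      exact Commute.zpow_left (h i hi) k
    · intro h i hi
      exact h i hi i (Subgroup.mem_zpowers i)
  rw [← Subgroup.centralizer_closure, key]
  exact Subgroup.finiteIndex_iInf' _ fun g hg => by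
    refine centralizer_zpowers_finiteIndex g (hFC g ?_)
    rw [← hSc]
    exact Subgroup.subset_closure (hSfin.mem_toFinset.mp hg)
end

section
/- Let G be a group with hyper-FC center H. Then for every surjective homomorphism τ : G → J onto an ICC group J, H is contained in the kernel of τ. -/
universe u

/-- An FC-element is one with a finite conjugacy class. -/
def IsFCElement {G : Type u} [Group G] (g : G) : Prop := (conjClassSet g).Finite

/-- A group is ICC if every nonidentity element has an infinite conjugacy class. -/
def IsICC (G : Type u) [Group G] : Prop := ∀ g : G, g ≠ 1 → (conjClassSet g).Infinite

/-- The FC-center of a group: the subgroup of elements with finite conjugacy class. -/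
def FCCenter (G : Type u) [Group G] : Subgroup G where
  carrier := {g | IsFCElement g}
  one_mem' := Set.Finite.subset (Set.finite_singleton 1) (by rintro h ⟨x, rfl⟩; simp)
  mul_mem' := by
    intro a b ha hb
    refine ((Set.Finite.image (fun p : G × G => p.1 * p.2) (ha.prod hb)).subset ?_)
    rintro h ⟨x, rfl⟩
    exact ⟨(x * a * x⁻¹, x * b * x⁻¹), ⟨⟨x, rfl⟩, ⟨x, rfl⟩⟩, by group⟩
  inv_mem' := by
    intro a ha
    refine (ha.image Inv.inv).subset ?_
    rintro h ⟨x, rfl⟩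
    exact ⟨x * a * x⁻¹, ⟨x, rfl⟩, by group⟩

instance FCCenter_normal (G : Type u) [Group G] : (FCCenter G).Normal := by
  constructor
  intro n hn g
  refine Set.Finite.subset hn ?_
  rintro h ⟨x, rfl⟩
  exact ⟨x * g, by group⟩

/-- One step of the upper FC-series: the preimage of the FC-center of the quotient. -/
noncomputable def fcStep {G : Type u} [Group G] (F : Subgroup G) : Subgroup G :=
  (FCCenter (G ⧸ Subgroup.normalClosure (F : Set G))).comap
    (QuotientGroup.mk' (Subgroup.normalClosure (F : Set G)))

instance fcStep_normal {G : Type u} [Group G] (F : Subgroup G) : (fcStep F).Normal :=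
  Subgroup.Normal.comap inferInstance _

/-- The (transfinite) upper FC-series of `G`. -/
noncomputable def FCSeries (G : Type u) [Group G] (o : Ordinal.{u}) : Subgroup G :=
  Ordinal.limitRecOn o ⊥ (fun _ F => fcStep F)
    (fun o _ ih => ⨆ a : {a : Ordinal.{u} // a < o}, ih a a.2)

lemma FCSeries_zero (G : Type u) [Group G] : FCSeries G 0 = ⊥ :=
  Ordinal.limitRecOn_zero ..

lemma FCSeries_succ (G : Type u) [Group G] (o : Ordinal.{u}) :
    FCSeries G (o + 1) = fcStep (FCSeries G o) :=
  Ordinal.limitRecOn_succ ..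

lemma FCSeries_limit (G : Type u) [Group G] (o : Ordinal.{u}) (h : Order.IsSuccLimit o) :
    FCSeries G o = ⨆ a : {a : Ordinal.{u} // a < o}, FCSeries G a :=
  Ordinal.limitRecOn_limit _ _ _ _ h

lemma normal_iSup {G : Type u} [Group G] {ι : Sort*} (f : ι → Subgroup G)
    (h : ∀ i, (f i).Normal) : (⨆ i, f i).Normal := by
  constructor
  intro n hn g
  have key : Subgroup.map (MulAut.conj g).toMonoidHom (⨆ i, f i) = ⨆ i, f i := by
    rw [Subgroup.map_iSup]
    refine iSup_congr fun i => ?_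
    ext x
    constructor
    · rintro ⟨y, hy, rfl⟩
      exact (h i).conj_mem y hy g
    · intro hx
      exact ⟨g⁻¹ * x * g, by simpa using (h i).conj_mem x hx g⁻¹, by simp [MulAut.conj]; group⟩
  rw [← key]
  exact ⟨n, hn, rfl⟩

instance FCSeries_normal (G : Type u) [Group G] (o : Ordinal.{u}) : (FCSeries G o).Normal := by
  induction o using Ordinal.limitRecOn with
  | zero => rw [FCSeries_zero]; infer_instance
  | add_one o ih => rw [FCSeries_succ]; infer_instance
  | limit o ho ih => rw [FCSeries_limit G o ho]; exact normal_iSup _ fun a => ih a a.2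

/-- The hyper-FC center of `G`: the stabilized term of the upper FC-series. -/
noncomputable def hyperFCCenter (G : Type u) [Group G] : Subgroup G :=
  ⨆ o : Ordinal.{u}, FCSeries G o

instance hyperFCCenter_normal (G : Type u) [Group G] : (hyperFCCenter G).Normal :=
  normal_iSup _ fun _ => inferInstance

/-- The finitely-indexed upper FC-series. -/
noncomputable def natFCSeries (G : Type u) [Group G] : ℕ → Subgroup G
  | 0 => ⊥
  | n + 1 => fcStep (natFCSeries G n)


lemma isFCElement_map {G J : Type*} [Group G] [Group J] (φ : G →* J)
    (hφ : Function.Surjective φ) {g : G} (hg : IsFCElement g) : IsFCElement (φ g) := by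
  refine (hg.image φ).subset ?_
  rintro h ⟨x, rfl⟩
  obtain ⟨y, rfl⟩ := hφ x
  exact ⟨y * g * y⁻¹, ⟨y, rfl⟩, by simp [map_mul]⟩

/-- The hyper-FC center is contained in the kernel of every surjection onto an ICC group. -/
theorem hyperFCCenter_le_ker_of_icc_quotient (G : Type u) [Group G]
    (J : Type u) [Group J] (τ : G →* J) (hτ : Function.Surjective τ) (hJ : IsICC J) :
    hyperFCCenter G ≤ τ.ker := by
  refine iSup_le fun o => ?_
  induction o using Ordinal.limitRecOn with
  | zero => rw [FCSeries_zero]; exact bot_le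
  | add_one o ih =>
    rw [FCSeries_succ]
    intro g hg
    set N := Subgroup.normalClosure ((FCSeries G o : Subgroup G) : Set G) with hNdef
    have hN : N ≤ τ.ker := Subgroup.normalClosure_le_normal ih
    set ψ : G ⧸ N →* J := QuotientGroup.lift N τ (fun x hx => hN hx) with hψdef
    have hψs : Function.Surjective ψ := fun j => by
      obtain ⟨x, rfl⟩ := hτ j
      exact ⟨QuotientGroup.mk x, rfl⟩
    have hfc : IsFCElement (ψ (QuotientGroup.mk g)) := isFCElement_map ψ hψs hg
    have : ψ (QuotientGroup.mk g) = τ g := rfl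
    rw [this] at hfc
    show τ g = 1
    by_contra h
    exact (hJ _ h) hfc
  | limit o ho ih =>
    rw [FCSeries_limit G o ho]
    exact iSup_le fun a => ih a a.2
end

section
/- Let G be a group with hyper-FC center H. The quotient map G → G/H is a universal ICC quotient: G/H is ICC, and every surjective homomorphism from G onto an ICC group factors uniquely through G/H. -/
universe u

lemma conjClassSet_image {G J : Type*} [Group G] [Group J] (φ : G →* J)
    (hφ : Function.Surjective φ) (g : G) :
    conjClassSet (φ g) = φ '' conjClassSet g := by
  ext h
  constructor
  · rintro ⟨y, rfl⟩
    obtain ⟨x, rfl⟩ := hφ y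
    exact ⟨x * g * x⁻¹, ⟨x, rfl⟩, by simp⟩
  · rintro ⟨_, ⟨x, rfl⟩, rfl⟩
    exact ⟨φ x, by simp⟩

lemma FCCenter_le_ker {G J : Type*} [Group G] [Group J] (φ : G →* J)
    (hφ : Function.Surjective φ) (hJ : IsICC J) : FCCenter G ≤ φ.ker := by
  intro g hg
  by_contra h
  have h1 : φ g ≠ 1 := by simpa [MonoidHom.mem_ker] using h
  exact hJ (φ g) h1 (conjClassSet_image φ hφ g ▸ (hg.image φ))

lemma le_fcStep {G : Type u} [Group G] (F : Subgroup G) : F ≤ fcStep F := by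
  intro g hg
  have h1 : (QuotientGroup.mk' (Subgroup.normalClosure (F : Set G))) g = 1 := by
    rw [QuotientGroup.mk'_apply, QuotientGroup.eq_one_iff]
    exact Subgroup.subset_normalClosure hg
  show (QuotientGroup.mk' _) g ∈ FCCenter _
  rw [h1]; exact (FCCenter _).one_mem

lemma FCSeries_mono (G : Type u) [Group G] : Monotone (FCSeries G) := by
  intro a b hab
  revert hab
  induction b using Ordinal.limitRecOn with
  | zero =>
    intro hab
    rw [nonpos_iff_eq_zero.mp hab]
  | add_one o ih =>
    intro hab
    rcases eq_or_lt_of_le hab with h | h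
    · exact le_of_eq (congrArg _ h)
    · have h' : a ≤ o := Order.lt_add_one_iff.mp h
      rw [FCSeries_succ]
      exact le_trans (ih h') (le_fcStep _)
  | limit o ho ih =>
    intro hab
    rcases eq_or_lt_of_le hab with h | h
    · exact le_of_eq (congrArg _ h)
    · rw [FCSeries_limit G o ho]
      exact le_iSup (fun x : {x : Ordinal.{u} // x < o} => FCSeries G x) ⟨a, h⟩

lemma exists_FCSeries_eq (G : Type u) [Group G] :
    ∃ κ : Ordinal.{u}, FCSeries G κ = hyperFCCenter G := by
  have hdir : Directed (· ≤ ·) (FCSeries G) := (FCSeries_mono G).directed_le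
  choose f hf using fun g : (hyperFCCenter G : Set G) =>
    (Subgroup.mem_iSup_of_directed hdir).mp g.2
  refine ⟨(⨆ g, f g) + Ordinal.omega0, le_antisymm (le_iSup (FCSeries G) _) ?_⟩
  intro x hx
  have hlt : f ⟨x, hx⟩ < (⨆ g, f g) + Ordinal.omega0 := by
    refine lt_of_le_of_lt (le_ciSup (Ordinal.bddAbove_range f) ⟨x, hx⟩) ?_
    simpa using (add_lt_add_iff_left (⨆ g, f g)).mpr Ordinal.omega0_pos
  exact FCSeries_mono G hlt.le (hf ⟨x, hx⟩)

lemma fcStep_hyperFCCenter (G : Type u) [Group G] :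
    fcStep (hyperFCCenter G) = hyperFCCenter G := by
  obtain ⟨κ, hκ⟩ := exists_FCSeries_eq G
  refine le_antisymm ?_ (le_fcStep _)
  calc fcStep (hyperFCCenter G) = fcStep (FCSeries G κ) := by rw [hκ]
    _ = FCSeries G (κ + 1) := (FCSeries_succ G κ).symm
    _ ≤ hyperFCCenter G := le_iSup (FCSeries G) _

lemma comap_FCCenter_congr {G : Type u} [Group G] {F E : Subgroup G} [F.Normal] [E.Normal] (h : F = E) :
    (FCCenter (G ⧸ F)).comap (QuotientGroup.mk' F) =
      (FCCenter (G ⧸ E)).comap (QuotientGroup.mk' E) := by subst h; rfl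

lemma comap_FCCenter_quot (G : Type u) [Group G] :
    (FCCenter (G ⧸ hyperFCCenter G)).comap (QuotientGroup.mk' (hyperFCCenter G)) =
      hyperFCCenter G := by
  have hN : Subgroup.normalClosure ((hyperFCCenter G : Subgroup G) : Set G) =
      hyperFCCenter G := Subgroup.normalClosure_eq_self _
  have h := fcStep_hyperFCCenter G
  unfold fcStep at h
  rw [← comap_FCCenter_congr hN]
  exact h

lemma FCCenter_quot_eq_bot (G : Type u) [Group G] :
    FCCenter (G ⧸ hyperFCCenter G) = ⊥ := by
  rw [eq_bot_iff]
  intro x hx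
  obtain ⟨g, rfl⟩ := QuotientGroup.mk'_surjective (hyperFCCenter G) x
  have hg : g ∈ hyperFCCenter G := by
    rw [← comap_FCCenter_quot G]
    exact Subgroup.mem_comap.mpr hx
  simpa [QuotientGroup.mk'_apply, QuotientGroup.eq_one_iff, Subgroup.mem_bot] using hg

lemma FCSeries_le_ker {G J : Type u} [Group G] [Group J] (τ : G →* J)
    (hτ : Function.Surjective τ) (hJ : IsICC J) (o : Ordinal.{u}) :
    FCSeries G o ≤ τ.ker := by
  induction o using Ordinal.limitRecOn with
  | zero => rw [FCSeries_zero]; exact bot_le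
  | add_one o ih =>
    rw [FCSeries_succ]
    set N := Subgroup.normalClosure ((FCSeries G o : Subgroup G) : Set G) with hNdef
    have hNle : N ≤ τ.ker := Subgroup.normalClosure_le_normal ih
    set τ' := QuotientGroup.lift N τ hNle with hτ'def
    have hτ' : Function.Surjective τ' := by
      intro j
      obtain ⟨g, rfl⟩ := hτ j
      exact ⟨QuotientGroup.mk g, rfl⟩
    intro g hg
    have : τ' (QuotientGroup.mk' N g) = 1 := FCCenter_le_ker τ' hτ' hJ hg
    simpa [hτ'def] using this
  | limit o ho ih =>
    rw [FCSeries_limit G o ho]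
    exact iSup_le fun a => ih a a.2

/-- The quotient map G → G/hyperFCCenter G is the universal ICC quotient: the quotient is
ICC, and every surjection of G onto an ICC group factors uniquely through it. -/
theorem quotient_hyperFCCenter_universal_icc (G : Type u) [Group G] :
    IsICC (G ⧸ hyperFCCenter G) ∧
      ∀ (J : Type u) [Group J] (τ : G →* J), Function.Surjective τ → IsICC J →
        ∃! ρ : (G ⧸ hyperFCCenter G) →* J,
          ρ.comp (QuotientGroup.mk' (hyperFCCenter G)) = τ := by
  constructor
  · intro x hx
    intro hfin
    have : x ∈ FCCenter (G ⧸ hyperFCCenter G) := hfin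
    rw [FCCenter_quot_eq_bot G, Subgroup.mem_bot] at this
    exact hx this
  · intro J _ τ hτ hJ
    have hker : hyperFCCenter G ≤ τ.ker := iSup_le (FCSeries_le_ker τ hτ hJ)
    refine ⟨QuotientGroup.lift (hyperFCCenter G) τ hker, ?_, ?_⟩
    · ext g
      simp
    · intro ρ hρ
      have hs := QuotientGroup.mk'_surjective (hyperFCCenter G)
      refine (MonoidHom.cancel_right hs).mp ?_
      rw [hρ]
      ext g
      simp
end

section
/- Let N be a finitely generated group and let Γ be the last nontrivial term of its lower central series considered (i.e., Γ = γ_{m-1}(N) where N/F is nilpotent of class at most m−1 for some FC subgroup F). If every element of Γ has a finite conjugacy class in N, then Γ is finitely generated. -/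
universe u

open scoped commutatorElement

/-- Key lemma: the commutator of a normal closure with the whole group is the
normal closure of commutators of the respective generators. -/
lemma commutator_normalClosure_top {N : Type u} [Group N] (S T : Set N)
    (hS : Subgroup.closure S = ⊤) :
    ⁅Subgroup.normalClosure T, (⊤ : Subgroup N)⁆ =
      Subgroup.normalClosure {g | ∃ t ∈ T, ∃ s ∈ S, ⁅t, s⁆ = g} := by
  set K := Subgroup.normalClosure {g | ∃ t ∈ T, ∃ s ∈ S, ⁅t, s⁆ = g} with hK
  apply le_antisymm
  · -- every commutator ⁅h, g⁆ with h ∈ normalClosure T lies in K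
    let π : N →* N ⧸ K := QuotientGroup.mk' K
    have hπsurj : Function.Surjective π := QuotientGroup.mk'_surjective K
    -- first: generators of N map into the centralizer of each π t
    have hcent : ∀ t ∈ T, π t ∈ Subgroup.center (N ⧸ K) := by
      intro t ht
      have hcomm : ∀ x : N, π t * π x = π x * π t := by
        have hle : (⊤ : Subgroup N) ≤ (Subgroup.centralizer {π t}).comap π := by
          rw [← hS, Subgroup.closure_le]
          intro s hs
          simp only [SetLike.mem_coe, Subgroup.mem_comap, Subgroup.mem_centralizer_iff,
            Set.mem_singleton_iff]
          rintro y rfl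
          have : π ⁅t, s⁆ = 1 := by
            rw [← MonoidHom.mem_ker, QuotientGroup.ker_mk']
            exact Subgroup.subset_normalClosure ⟨t, ht, s, hs, rfl⟩
          rw [map_commutatorElement] at this
          have := commutatorElement_eq_one_iff_mul_comm.mp this
          rw [this]
        intro x
        have hx : π x ∈ Subgroup.centralizer {π t} := hle (Subgroup.mem_top x)
        exact Subgroup.mem_centralizer_iff.mp hx (π t) rfl
      rw [Subgroup.mem_center_iff]
      intro q
      obtain ⟨x, rfl⟩ := hπsurj q
      exact (hcomm x).symm
    -- hence all of normalClosure T maps into the center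
    have hNC : Subgroup.normalClosure T ≤ (Subgroup.center (N ⧸ K)).comap π := by
      have : ((Subgroup.center (N ⧸ K)).comap π).Normal :=
        (Subgroup.center (N ⧸ K)).normal_comap π
      exact Subgroup.normalClosure_le_normal fun t ht => hcent t ht
    rw [Subgroup.commutator_le]
    intro g₁ hg₁ g₂ _
    have h1 : π g₁ ∈ Subgroup.center (N ⧸ K) := hNC hg₁
    have : π ⁅g₁, g₂⁆ = 1 := by
      rw [map_commutatorElement]
      exact commutatorElement_eq_one_iff_mul_comm.mpr
        ((Subgroup.mem_center_iff.mp h1 (π g₂)).symm)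
    rwa [← MonoidHom.mem_ker, QuotientGroup.ker_mk'] at this
  · -- K ≤ ⁅normalClosure T, ⊤⁆, since the latter is normal and contains generators
    have : (⁅Subgroup.normalClosure T, (⊤ : Subgroup N)⁆).Normal := inferInstance
    apply Subgroup.normalClosure_le_normal
    rintro g ⟨t, ht, s, _, rfl⟩
    exact Subgroup.commutator_mem_commutator (Subgroup.subset_normalClosure ht)
      (Subgroup.mem_top s)

/-- Each term of the lower central series of a finitely generated group is the
normal closure of a finite set. -/
lemma lowerCentralSeries_eq_normalClosure {N : Type u} [Group N] (S : Set N)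
    (hS : Subgroup.closure S = ⊤) (hSfin : S.Finite) (k : ℕ) :
    ∃ T : Set N, T.Finite ∧ (⊤ : Subgroup N).lowerCentralSeries k = Subgroup.normalClosure T := by
  induction k with
  | zero =>
    refine ⟨S, hSfin, ?_⟩
    have h1 : Subgroup.normalClosure S = ⊤ :=
      top_unique (hS ▸ Subgroup.closure_le_normalClosure)
    simp [h1]
  | succ n ih =>
    obtain ⟨T, hTfin, hT⟩ := ih
    refine ⟨{g | ∃ t ∈ T, ∃ s ∈ S, ⁅t, s⁆ = g}, ?_, ?_⟩
    · have : {g | ∃ t ∈ T, ∃ s ∈ S, ⁅t, s⁆ = g} =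
          (fun p : N × N => ⁅p.1, p.2⁆) '' (T ×ˢ S) := by
        ext g
        constructor
        · rintro ⟨t, ht, s, hs, rfl⟩; exact ⟨(t, s), ⟨ht, hs⟩, rfl⟩
        · rintro ⟨⟨t, s⟩, ⟨ht, hs⟩, rfl⟩; exact ⟨t, ht, s, hs, rfl⟩
      rw [this]
      exact (hTfin.prod hSfin).image _
    · rw [Subgroup.lowerCentralSeries_succ, hT]
      exact commutator_normalClosure_top S T hS

/-- If N is finitely generated and every element of the term γ_k(N) of the lower central
series has a finite conjugacy class in N, then γ_k(N) is finitely generated. -/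
theorem lowerCentralSeries_fg_of_fc (N : Type u) [Group N] (hfg : Group.FG N) (k : ℕ)
    (h : ∀ g ∈ (⊤ : Subgroup N).lowerCentralSeries k, (conjClassSet g).Finite) :
    Group.FG ((⊤ : Subgroup N).lowerCentralSeries k) := by
  obtain ⟨S, hS, hSfin⟩ := Group.fg_iff.mp hfg
  obtain ⟨T, hTfin, hT⟩ := lowerCentralSeries_eq_normalClosure S hS hSfin k
  rw [Group.fg_iff_subgroup_fg, Subgroup.fg_iff]
  refine ⟨Group.conjugatesOfSet T, ?_, ?_⟩
  · rw [hT]; rfl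
  · -- the set of conjugates of T is finite
    have hTsub : T ⊆ (⊤ : Subgroup N).lowerCentralSeries k := by
      rw [hT]; exact Subgroup.subset_normalClosure
    have : Group.conjugatesOfSet T = ⋃ t ∈ T, conjugatesOf t := by
      rfl
    rw [this]
    refine hTfin.biUnion fun t ht => ?_
    have hfin := h t (hTsub ht)
    have : conjugatesOf t = conjClassSet t := by
      ext b
      simp only [conjugatesOf, Set.mem_setOf_eq, conjClassSet, isConj_iff]
    rwa [this]
end

section
/- Let G be a finitely generated group whose upper FC-series reaches G after finitely many steps (G ∈ FC_n for some n). Then G is virtually nilpotent; more precisely G has a nilpotent normal-in-itself subgroup of finite index of nilpotency class at most n. -/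
universe u

/-! ### Auxiliary lemmas -/

section Aux

variable {G : Type u} [Group G]

theorem conjClassSet_map {G' : Type u} [Group G'] (f : G →* G') (hf : Function.Surjective f)
    (g : G) : conjClassSet (f g) = f '' conjClassSet g := by
  ext h
  constructor
  · rintro ⟨x, rfl⟩
    obtain ⟨y, rfl⟩ := hf x
    exact ⟨y * g * y⁻¹, ⟨y, rfl⟩, by simp⟩
  · rintro ⟨_, ⟨y, rfl⟩, rfl⟩
    exact ⟨f y, by simp⟩

theorem mem_fcStep_iff {F : Subgroup G} {g : G} :
    g ∈ fcStep F ↔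
      ((QuotientGroup.mk' (Subgroup.normalClosure (F : Set G))) '' conjClassSet g).Finite := by
  rw [fcStep, Subgroup.mem_comap]
  show IsFCElement _ ↔ _
  rw [IsFCElement,
    conjClassSet_map (QuotientGroup.mk' _) (QuotientGroup.mk'_surjective _) g]

theorem natFCSeries_normal (G : Type u) [Group G] : ∀ n, (natFCSeries G n).Normal
  | 0 => show (⊥ : Subgroup G).Normal from inferInstance
  | n + 1 => (FCCenter_normal _).comap _

theorem finite_conj_of_mem_one {g : G} (hg : g ∈ natFCSeries G 1) :
    (conjClassSet g).Finite := by
  have h1 : natFCSeries G 1 = fcStep (⊥ : Subgroup G) := rfl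
  rw [h1, mem_fcStep_iff] at hg
  have hncl : Subgroup.normalClosure ((⊥ : Subgroup G) : Set G) = ⊥ :=
    Subgroup.normalClosure_eq_self _
  have hinj : Function.Injective
      (QuotientGroup.mk' (Subgroup.normalClosure ((⊥ : Subgroup G) : Set G))) := by
    rw [← MonoidHom.ker_eq_bot_iff, QuotientGroup.ker_mk']
    exact hncl
  exact Set.Finite.of_finite_image hg hinj.injOn

open scoped commutatorElement in
/-- The lower central series terms of a finitely generated group are normal closures of
finitely many elements. -/
theorem lcs_eq_normalClosure (P : Type u) [Group P] (S : Set P) (hSfin : S.Finite)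
    (hSgen : Subgroup.closure S = ⊤) :
    ∀ n, ∃ T : Set P, T.Finite ∧ Subgroup.normalClosure T = Subgroup.lowerCentralSeries (⊤ : Subgroup P) n := by
  intro n
  induction n with
  | zero =>
    refine ⟨S, hSfin, ?_⟩
    rw [lowerCentralSeries_zero]
    exact le_antisymm le_top (hSgen ▸ Subgroup.closure_le_normalClosure)
  | succ n ih =>
    obtain ⟨T, hTfin, hT⟩ := ih
    refine ⟨Set.image2 (fun t s => ⁅t, s⁆) T S, hTfin.image2 _ hSfin, ?_⟩
    have hsucc : Subgroup.lowerCentralSeries (⊤ : Subgroup P) (n + 1) = ⁅Subgroup.lowerCentralSeries (⊤ : Subgroup P) n, ⊤⁆ := by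
      rw [lowerCentralSeries_succ, Subgroup.commutator_def]
    rw [hsucc, ← hT]
    set R := Subgroup.normalClosure (Set.image2 (fun t s => ⁅t, s⁆) T S) with hR
    apply le_antisymm
    · haveI : (⁅Subgroup.normalClosure T, (⊤ : Subgroup P)⁆).Normal :=
        Subgroup.commutator_normal _ _
      apply Subgroup.normalClosure_le_normal
      rintro x ⟨t, ht, s, hs, rfl⟩
      exact Subgroup.commutator_mem_commutator (Subgroup.subset_normalClosure ht)
        (Subgroup.mem_top _)
    · -- ⁅ncl T, ⊤⁆ ≤ R
      set π := QuotientGroup.mk' R with hπ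
      have hπsurj : Function.Surjective π := QuotientGroup.mk'_surjective R
      have hcent : Subgroup.map π (Subgroup.normalClosure T) ≤ Subgroup.center _ := by
        rw [Subgroup.map_normalClosure _ _ hπsurj]
        apply Subgroup.normalClosure_le_normal
        rintro _ ⟨t, ht, rfl⟩
        rw [SetLike.mem_coe, Subgroup.mem_center_iff]
        intro q
        have hq : q ∈ Subgroup.map π (Subgroup.closure S) := by
          rw [hSgen]
          obtain ⟨x, rfl⟩ := hπsurj q
          exact ⟨x, trivial, rfl⟩
        rw [MonoidHom.map_closure] at hq
        have hle : Subgroup.closure (π '' S) ≤ Subgroup.centralizer {π t} := by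
          rw [Subgroup.closure_le]
          rintro _ ⟨s, hs, rfl⟩
          rw [SetLike.mem_coe, Subgroup.mem_centralizer_iff]
          rintro h rfl
          have hcomm : ⁅t, s⁆ ∈ R :=
            Subgroup.subset_normalClosure (Set.mem_image2_of_mem ht hs)
          have : π ⁅t, s⁆ = 1 := by
            rwa [← MonoidHom.mem_ker, QuotientGroup.ker_mk']
          rw [map_commutatorElement] at this
          exact (commutatorElement_eq_one_iff_commute.mp this).eq
        have := hle hq
        rw [Subgroup.mem_centralizer_iff] at this
        exact (this (π t) rfl).symm
      rw [← QuotientGroup.ker_mk' R, ← Subgroup.map_eq_bot_iff,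
        Subgroup.map_commutator]
      rw [eq_bot_iff, Subgroup.commutator_le]
      intro a ha b _
      have ha' := hcent ha
      rw [Subgroup.mem_center_iff] at ha'
      rw [Subgroup.mem_bot, commutatorElement_eq_one_iff_commute]
      exact (ha' b).symm

/-- The centralizer of an element with finite conjugacy class has finite index. -/
theorem centralizer_finiteIndex {P : Type u} [Group P] {u : P}
    (h : (conjClassSet u).Finite) : (Subgroup.centralizer ({u} : Set P)).FiniteIndex := by
  have horb : MulAction.orbit (ConjAct P) u = conjClassSet u := by
    ext x
    constructor
    · rintro ⟨g, rfl⟩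
      exact ⟨ConjAct.ofConjAct g, (ConjAct.smul_def g u).symm⟩
    · rintro ⟨y, rfl⟩
      exact ⟨ConjAct.toConjAct y, by simp [ConjAct.smul_def]⟩
  have hidx : (MulAction.stabilizer (ConjAct P) u).index ≠ 0 := by
    have hne : (conjClassSet u).Nonempty := ⟨u, 1, by group⟩
    rw [MulAction.index_stabilizer, horb]
    intro h0
    exact (Set.nonempty_iff_ne_empty.mp hne) ((Set.ncard_eq_zero h).mp h0)
  constructor
  rw [Subgroup.centralizer_eq_comap_stabilizer]
  exact (Subgroup.index_comap_of_surjective (H := MulAction.stabilizer (ConjAct P) u)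
    (f := (ConjAct.toConjAct : P ≃* ConjAct P).toMonoidHom) ConjAct.toConjAct.surjective).trans_ne hidx

/-- The image of the (k+1)-st term of the FC-series in the quotient by (the normal closure of)
the first term is contained in the k-th term of the FC-series of the quotient. -/
theorem natFCSeries_quot_le (G : Type u) [Group G] (k : ℕ) :
    Subgroup.map (QuotientGroup.mk' (Subgroup.normalClosure ((natFCSeries G 1 : Subgroup G) : Set G)))
        (natFCSeries G (k + 1)) ≤
      natFCSeries (G ⧸ Subgroup.normalClosure ((natFCSeries G 1 : Subgroup G) : Set G)) k := by
  induction k with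
  | zero =>
    rintro _ ⟨g, hg, rfl⟩
    show _ ∈ (⊥ : Subgroup _)
    rw [Subgroup.mem_bot, ← MonoidHom.mem_ker, QuotientGroup.ker_mk']
    exact Subgroup.subset_normalClosure hg
  | succ k ih =>
    rintro _ ⟨g, hg, rfl⟩
    have hg' : g ∈ fcStep (natFCSeries G (k + 1)) := hg
    rw [mem_fcStep_iff] at hg'
    show _ ∈ fcStep (natFCSeries _ k)
    rw [mem_fcStep_iff]
    set K := Subgroup.normalClosure ((natFCSeries G 1 : Subgroup G) : Set G) with hK
    set π := QuotientGroup.mk' K with hπ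
    set Q := G ⧸ K with hQ
    set L := Subgroup.normalClosure ((natFCSeries Q k : Subgroup Q) : Set Q) with hL
    set NC := Subgroup.normalClosure ((natFCSeries G (k+1) : Subgroup G) : Set G) with hNC
    have hker : ∀ x ∈ NC, (QuotientGroup.mk' L).comp π x = 1 := by
      have hle : NC ≤ MonoidHom.ker ((QuotientGroup.mk' L).comp π) := by
        apply Subgroup.normalClosure_le_normal
        intro y hy
        rw [SetLike.mem_coe, MonoidHom.mem_ker]
        show (QuotientGroup.mk' L) (π y) = 1
        rw [← MonoidHom.mem_ker, QuotientGroup.ker_mk']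
        exact Subgroup.subset_normalClosure (ih ⟨y, hy, rfl⟩)
      intro x hx
      exact hle hx
    obtain ⟨φ, hφ⟩ : ∃ φ : (G ⧸ NC) →* (Q ⧸ L),
        ∀ c : G, φ ((QuotientGroup.mk' NC) c) = (QuotientGroup.mk' L) (π c) :=
      ⟨QuotientGroup.lift NC _ hker, fun c => QuotientGroup.lift_mk' NC hker c⟩
    refine Set.Finite.subset (hg'.image φ) ?_
    rintro _ ⟨w, ⟨x', hx'⟩, rfl⟩
    obtain ⟨x, rfl⟩ := QuotientGroup.mk'_surjective K x'
    refine ⟨(QuotientGroup.mk' NC) (x * g * x⁻¹), ⟨x * g * x⁻¹, ⟨x, rfl⟩, rfl⟩, ?_⟩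
    rw [hφ]
    refine congrArg (QuotientGroup.mk' L) ?_
    rw [← hx']
    show π (x * g * x⁻¹) = _
    rw [map_mul, map_mul, map_inv]

end Aux

/-- A finitely generated group whose upper FC-series reaches G in n steps is virtually
nilpotent: it has a finite-index subgroup which is nilpotent of class at most n. -/
theorem fg_finite_fc_rank_virtually_nilpotent (G : Type u) [Group G] (hfg : Group.FG G)
    (n : ℕ) (h : natFCSeries G n = ⊤) :
    ∃ N : Subgroup G, N.FiniteIndex ∧ upperCentralSeries N n = ⊤ := by
  induction n generalizing G with
  | zero =>
    have hsub : Subsingleton G := by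
      constructor
      intro a b
      have ha : a ∈ natFCSeries G 0 := h ▸ Subgroup.mem_top a
      have hb : b ∈ natFCSeries G 0 := h ▸ Subgroup.mem_top b
      rw [show natFCSeries G 0 = ⊥ from rfl, Subgroup.mem_bot] at ha hb
      rw [ha, hb]
    refine ⟨⊤, ⟨by simp [Subgroup.index_top]⟩, ?_⟩
    haveI : Subsingleton (⊤ : Subgroup G) := by
      constructor; intro a b; exact Subtype.ext (Subsingleton.elim _ _)
    exact Subsingleton.elim _ _
  | succ n IH =>
    haveI : Group.FG G := hfg
    haveI : (natFCSeries G 1).Normal := natFCSeries_normal G 1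
    set K := Subgroup.normalClosure ((natFCSeries G 1 : Subgroup G) : Set G) with hKdef
    have hKF : K = natFCSeries G 1 := Subgroup.normalClosure_eq_self _
    set π := QuotientGroup.mk' K with hπ
    have hπsurj : Function.Surjective π := QuotientGroup.mk'_surjective K
    have hQtop : natFCSeries (G ⧸ K) n = ⊤ := by
      rw [eq_top_iff]
      intro q _
      obtain ⟨g, rfl⟩ := hπsurj q
      exact natFCSeries_quot_le G n ⟨g, h ▸ Subgroup.mem_top g, rfl⟩
    haveI : Group.FG (G ⧸ K) := Group.fg_of_surjective hπsurj
    obtain ⟨M, hMfi, hM⟩ := IH (G ⧸ K) (by infer_instance) hQtop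
    set N₀ := Subgroup.comap π M with hN₀
    haveI hN₀fi : N₀.FiniteIndex :=
      ⟨by rw [hN₀, Subgroup.index_comap_of_surjective _ hπsurj]; exact hMfi.index_ne_zero⟩
    haveI : Group.FG N₀ := Subgroup.fg_of_index_ne_zero (H := N₀)
    have hmem : ∀ x : N₀, π (x : G) ∈ M := fun x => x.2
    set φ : N₀ →* M := MonoidHom.codRestrict (π.comp N₀.subtype) M hmem with hφdef
    haveI hMnil : Group.IsNilpotent M := ⟨⟨n, hM⟩⟩
    have hMlcs : Subgroup.lowerCentralSeries (⊤ : Subgroup M) n = ⊥ :=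
      lowerCentralSeries_eq_bot_iff_nilpotencyClass_le.mpr
        (upperCentralSeries_eq_top_iff_nilpotencyClass_le.mp hM)
    have hFC : ∀ x : N₀, x ∈ Subgroup.lowerCentralSeries (⊤ : Subgroup N₀) n → (conjClassSet x).Finite := by
      intro x hx
      have hxker : x ∈ MonoidHom.ker φ := by
        have h1 : Subgroup.map φ (Subgroup.lowerCentralSeries (⊤ : Subgroup N₀) n) ≤ Subgroup.lowerCentralSeries (⊤ : Subgroup M) n :=
          lowerCentralSeries.map φ n
        rw [hMlcs] at h1
        have := h1 (Subgroup.mem_map_of_mem φ hx)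
        rwa [Subgroup.mem_bot, ← MonoidHom.mem_ker] at this
      have hπx : π (x : G) = 1 := by
        rw [MonoidHom.mem_ker] at hxker
        have : (φ x : G ⧸ K) = ((1 : M) : G ⧸ K) := congrArg Subtype.val hxker
        exact this
      have hxF1 : (x : G) ∈ natFCSeries G 1 := by
        rw [← hKF, ← QuotientGroup.ker_mk' K]
        exact hπx
      have hGfin : (conjClassSet (x : G)).Finite := finite_conj_of_mem_one hxF1
      refine Set.Finite.of_finite_image (f := N₀.subtype) ?_ N₀.subtype_injective.injOn
      refine hGfin.subset ?_
      rintro _ ⟨_, ⟨y, rfl⟩, rfl⟩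
      exact ⟨(y : G), rfl⟩
    obtain ⟨S, hSgen, hSfin⟩ := Group.fg_iff.mp (by infer_instance : Group.FG N₀)
    obtain ⟨T, hTfin, hTncl⟩ := lcs_eq_normalClosure N₀ S hSfin hSgen n
    set U := ⋃ t ∈ T, conjClassSet t with hU
    have hUsub : U ⊆ (Subgroup.lowerCentralSeries (⊤ : Subgroup N₀) n : Set N₀) := by
      intro u hu
      simp only [hU, Set.mem_iUnion] at hu
      obtain ⟨t, ht, y, rfl⟩ := hu
      have htmem : t ∈ Subgroup.lowerCentralSeries (⊤ : Subgroup N₀) n := hTncl ▸ Subgroup.subset_normalClosure ht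
      exact (Subgroup.lowerCentralSeries_normal _ n).conj_mem t htmem y
    have hUfin : U.Finite :=
      Set.Finite.biUnion hTfin fun t ht =>
        hFC t (hTncl ▸ Subgroup.subset_normalClosure ht)
    have hUgen : Subgroup.closure U = Subgroup.lowerCentralSeries (⊤ : Subgroup N₀) n := by
      rw [← hTncl]
      show Subgroup.closure U = Subgroup.closure (Group.conjugatesOfSet T)
      congr 1
      ext u
      simp only [hU, Set.mem_iUnion, Group.mem_conjugatesOfSet_iff]
      constructor
      · rintro ⟨t, ht, y, rfl⟩
        exact ⟨t, ht, isConj_iff.mpr ⟨y, rfl⟩⟩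
      · rintro ⟨t, ht, hconj⟩
        obtain ⟨y, hy⟩ := isConj_iff.mp hconj
        exact ⟨t, ht, y, hy⟩
    set H' : Subgroup N₀ := ⨅ u ∈ hUfin.toFinset, Subgroup.centralizer {u} with hH'
    haveI hH'fi : H'.FiniteIndex := by
      rw [hH']
      exact Subgroup.finiteIndex_iInf' _ fun u hu =>
        centralizer_finiteIndex (hFC u (hUsub (hUfin.mem_toFinset.mp hu)))
    have hH'cent : ∀ y ∈ H', ∀ a ∈ Subgroup.lowerCentralSeries (⊤ : Subgroup N₀) n, a * y = y * a := by
      intro y hy a ha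
      rw [← hUgen] at ha
      have hyC : ∀ u ∈ U, u * y = y * u := by
        intro u hu
        have hyu : y ∈ Subgroup.centralizer {u} :=
          Subgroup.mem_iInf.mp (Subgroup.mem_iInf.mp hy u) (hUfin.mem_toFinset.mpr hu)
        rw [Subgroup.mem_centralizer_iff] at hyu
        exact hyu u (Set.mem_singleton u)
      have hle : Subgroup.closure U ≤ Subgroup.centralizer {y} := by
        rw [Subgroup.closure_le]
        intro u hu
        rw [SetLike.mem_coe, Subgroup.mem_centralizer_iff]
        intro z hz
        rw [Set.mem_singleton_iff] at hz
        subst hz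
        exact (hyC u hu).symm
      have hy2 := hle ha
      rw [Subgroup.mem_centralizer_iff] at hy2
      exact (hy2 y (Set.mem_singleton y)).symm
    set H := Subgroup.map N₀.subtype H' with hH
    have hHle : H ≤ N₀ := Subgroup.map_subtype_le H'
    haveI hHfi : H.FiniteIndex := by
      constructor
      rw [hH, Subgroup.index_map_subtype]
      exact mul_ne_zero hH'fi.index_ne_zero hN₀fi.index_ne_zero
    refine ⟨H, hHfi, ?_⟩
    have hcentral : Subgroup.lowerCentralSeries (⊤ : Subgroup H) n ≤ Subgroup.center H := by
      intro x hx
      rw [Subgroup.mem_center_iff]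
      intro y
      have hxN : Subgroup.inclusion hHle x ∈ Subgroup.lowerCentralSeries (⊤ : Subgroup N₀) n :=
        lowerCentralSeries.map (Subgroup.inclusion hHle) n
          (Subgroup.mem_map_of_mem _ hx)
      obtain ⟨y', hy', hy'eq⟩ := y.2
      have hcomm : (Subgroup.inclusion hHle x : N₀) * y' = y' * (Subgroup.inclusion hHle x) :=
        hH'cent y' hy' _ hxN
      have h1 : ((Subgroup.inclusion hHle x : N₀) : G) = (x : G) := rfl
      have h2 : ((y' : N₀) : G) = (y : G) := hy'eq
      have hG : (x : G) * (y : G) = (y : G) * (x : G) := by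
        calc (x : G) * (y : G)
            = ((Subgroup.inclusion hHle x : N₀) : G) * ((y' : N₀) : G) := by rw [h1, h2]
        _ = (((Subgroup.inclusion hHle x) * y' : N₀) : G) := rfl
        _ = ((y' * (Subgroup.inclusion hHle x) : N₀) : G) := by rw [hcomm]
        _ = ((y' : N₀) : G) * ((Subgroup.inclusion hHle x : N₀) : G) := rfl
        _ = (y : G) * (x : G) := by rw [h1, h2]
      apply Subtype.ext
      show ((y * x : H) : G) = ((x * y : H) : G)
      push_cast
      exact hG.symm
    have hbot : Subgroup.lowerCentralSeries (⊤ : Subgroup H) (n + 1) = ⊥ := lowerCentralSeries_succ_eq_bot _ hcentral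
    haveI : Group.IsNilpotent H := nilpotent_iff_lowerCentralSeries.mpr ⟨n + 1, hbot⟩
    exact upperCentralSeries_eq_top_iff_nilpotencyClass_le.mpr
      (lowerCentralSeries_eq_bot_iff_nilpotencyClass_le.mp hbot)
end

section
/- A finitely generated group G is virtually nilpotent if and only if G has no nontrivial ICC quotient. -/
universe u

open Subgroup Pointwise
open scoped commutatorElement

section FC

variable {G : Type u} [Group G]

/-- The set of elements having finitely many conjugates modulo `N`. -/
def fcSet (N : Subgroup G) : Set G :=
  {g | ∃ T : Set G, T.Finite ∧ ∀ x : G, ∃ t ∈ T, t⁻¹ * (x * g * x⁻¹) ∈ N}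

lemma fcSet_mono {N M : Subgroup G} (h : N ≤ M) : fcSet N ⊆ fcSet M := by
  rintro g ⟨T, hT, hP⟩
  exact ⟨T, hT, fun x => by obtain ⟨t, ht, hm⟩ := hP x; exact ⟨t, ht, h hm⟩⟩

lemma one_mem_fcSet (N : Subgroup G) : (1 : G) ∈ fcSet N :=
  ⟨{1}, Set.finite_singleton 1, fun x => ⟨1, rfl, by simpa using N.one_mem⟩⟩

lemma mem_fcSet_of_mem {N : Subgroup G} (hN : N.Normal) {g : G} (hg : g ∈ N) :
    g ∈ fcSet N :=
  ⟨{1}, Set.finite_singleton 1, fun x => ⟨1, rfl, by simpa using hN.conj_mem g hg x⟩⟩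

lemma conj_mem_fcSet {N : Subgroup G} {g : G} (hg : g ∈ fcSet N) (y : G) :
    y * g * y⁻¹ ∈ fcSet N := by
  obtain ⟨T, hT, hP⟩ := hg
  refine ⟨T, hT, fun x => ?_⟩
  obtain ⟨t, ht, hm⟩ := hP (x * y)
  refine ⟨t, ht, ?_⟩
  have : x * (y * g * y⁻¹) * x⁻¹ = x * y * g * (x * y)⁻¹ := by group
  rw [this]
  exact hm

lemma mul_mem_fcSet {N : Subgroup G} (hN : N.Normal) {g h : G}
    (hg : g ∈ fcSet N) (hh : h ∈ fcSet N) : g * h ∈ fcSet N := by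
  obtain ⟨T, hT, hP⟩ := hg
  obtain ⟨S, hS, hQ⟩ := hh
  refine ⟨T * S, hT.mul hS, fun x => ?_⟩
  obtain ⟨t, ht, hmt⟩ := hP x
  obtain ⟨s, hs, hms⟩ := hQ x
  refine ⟨t * s, Set.mul_mem_mul ht hs, ?_⟩
  have key : (t * s)⁻¹ * (x * (g * h) * x⁻¹)
      = (s⁻¹ * (t⁻¹ * (x * g * x⁻¹)) * s) * (s⁻¹ * (x * h * x⁻¹)) := by group
  rw [key]
  refine N.mul_mem ?_ hms
  simpa using hN.conj_mem _ hmt s⁻¹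

lemma inv_mem_fcSet {N : Subgroup G} (hN : N.Normal) {g : G}
    (hg : g ∈ fcSet N) : g⁻¹ ∈ fcSet N := by
  obtain ⟨T, hT, hP⟩ := hg
  refine ⟨T⁻¹, hT.inv, fun x => ?_⟩
  obtain ⟨t, ht, hmt⟩ := hP x
  refine ⟨t⁻¹, Set.inv_mem_inv.mpr ht, ?_⟩
  have h1 : (x * g * x⁻¹)⁻¹ * t ∈ N := by
    have := N.inv_mem hmt
    simpa [mul_assoc] using this
  have key : (t⁻¹)⁻¹ * (x * g⁻¹ * x⁻¹) = t * ((x * g * x⁻¹)⁻¹ * t) * t⁻¹ * t * t⁻¹ := by group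
  have key2 : (t⁻¹)⁻¹ * (x * g⁻¹ * x⁻¹) = t * ((x * g * x⁻¹)⁻¹ * t) * t⁻¹ := by group
  rw [key2]
  exact hN.conj_mem _ h1 t

end FC
section FC2

variable {G : Type u} [Group G]

/-- For `N` normal, the FC-elements modulo `N` form a subgroup. -/
def fcSubgroup (N : Subgroup G) (hN : N.Normal) : Subgroup G where
  carrier := fcSet N
  one_mem' := one_mem_fcSet N
  mul_mem' := fun hg hh => mul_mem_fcSet hN hg hh
  inv_mem' := fun hg => inv_mem_fcSet hN hg

lemma fcSubgroup_normal (N : Subgroup G) (hN : N.Normal) : (fcSubgroup N hN).Normal :=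
  ⟨fun g hg y => conj_mem_fcSet hg y⟩

/-- Membership in `fcSet N` is equivalent to finiteness of the set of conjugates mod `N`. -/
lemma fcSet_iff_finite (N : Subgroup G) (g : G) :
    g ∈ fcSet N ↔ (Set.range fun x : G => ((x * g * x⁻¹ : G) : G ⧸ N)).Finite := by
  constructor
  · rintro ⟨T, hT, hP⟩
    refine ((hT.image (QuotientGroup.mk : G → G ⧸ N)).subset ?_)
    rintro q ⟨x, rfl⟩
    obtain ⟨t, ht, hm⟩ := hP x
    exact ⟨t, ht, QuotientGroup.eq.mpr hm⟩
  · intro hfin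
    refine ⟨Quotient.out '' (Set.range fun x : G => ((x * g * x⁻¹ : G) : G ⧸ N)),
      hfin.image _, fun x => ?_⟩
    refine ⟨((x * g * x⁻¹ : G) : G ⧸ N).out, ⟨_, ⟨x, rfl⟩, rfl⟩, ?_⟩
    exact QuotientGroup.eq.mp (Quotient.out_eq _)

lemma conjClassSet_mk (N : Subgroup G) [N.Normal] (g : G) :
    conjClassSet ((g : G ⧸ N)) = Set.range fun x : G => ((x * g * x⁻¹ : G) : G ⧸ N) := by
  ext h
  constructor
  · rintro ⟨y, rfl⟩
    obtain ⟨x, rfl⟩ := QuotientGroup.mk_surjective y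
    exact ⟨x, by rfl⟩
  · rintro ⟨x, rfl⟩
    exact ⟨(x : G ⧸ N), rfl⟩

/-- If every element outside `F` has infinitely many conjugates mod `F`, the quotient is ICC. -/
lemma quotient_isICC (F : Subgroup G) [F.Normal] (hF : fcSet F ⊆ (F : Set G)) :
    IsICC (G ⧸ F) := by
  intro q hq
  obtain ⟨g, rfl⟩ := QuotientGroup.mk_surjective q
  have hg : g ∉ F := fun h => hq (by rwa [QuotientGroup.eq_one_iff])
  rw [conjClassSet_mk]
  intro hfin
  exact hg (hF ((fcSet_iff_finite F g).mpr hfin))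

end FC2

section Ser

variable (G : Type u) [Group G]

/-- The transfinite upper FC-central series. -/
noncomputable def FSer : Ordinal.{u} → Subgroup G := fun o =>
  Subgroup.normalClosure (⋃ γ : {γ : Ordinal.{u} // γ < o}, fcSet (FSer γ.1))
termination_by o => o
decreasing_by exact γ.2

instance FSer_normal (o : Ordinal.{u}) : (FSer G o).Normal := by
  rw [FSer]; exact Subgroup.normalClosure_normal

variable {G}

lemma fcSet_FSer_le {γ o : Ordinal.{u}} (h : γ < o) :
    fcSet (FSer G γ) ⊆ (FSer G o : Set G) := by
  intro x hx
  have : x ∈ Subgroup.normalClosure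
      (⋃ γ' : {γ' : Ordinal.{u} // γ' < o}, fcSet (FSer G γ'.1)) :=
    Subgroup.subset_normalClosure (Set.mem_iUnion.mpr ⟨⟨γ, h⟩, hx⟩)
  rw [FSer]
  exact this

lemma FSer_mono : Monotone (FSer G) := by
  intro o o' h
  rw [FSer, FSer]
  refine Subgroup.normalClosure_mono ?_
  refine Set.iUnion_subset fun γ => ?_
  exact Set.subset_iUnion_of_subset (⟨γ.1, lt_of_lt_of_le γ.2 h⟩ : {γ : Ordinal.{u} // γ < o'}) le_rfl

lemma FSer_zero : FSer G 0 = ⊥ := by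
  rw [FSer]
  refine le_antisymm (Subgroup.normalClosure_le_normal ?_) bot_le
  intro x hx
  obtain ⟨⟨γ, hγ⟩, -⟩ := Set.mem_iUnion.mp hx
  exact absurd hγ (not_lt_of_ge (zero_le (a := γ)))

lemma mem_FSer {o : Ordinal.{u}} (ho : o ≠ 0) {x : G} :
    x ∈ FSer G o ↔ ∃ γ < o, x ∈ fcSet (FSer G γ) := by
  have hpos : 0 < o := pos_iff_ne_zero.mpr ho
  let S : Subgroup G :=
    { carrier := ⋃ γ : {γ : Ordinal.{u} // γ < o}, fcSet (FSer G γ.1)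
      one_mem' := Set.mem_iUnion.mpr ⟨⟨0, hpos⟩, one_mem_fcSet _⟩
      mul_mem' := by
        rintro a b ha hb
        obtain ⟨⟨γ₁, h₁⟩, ha⟩ := Set.mem_iUnion.mp ha
        obtain ⟨⟨γ₂, h₂⟩, hb⟩ := Set.mem_iUnion.mp hb
        refine Set.mem_iUnion.mpr ⟨⟨max γ₁ γ₂, max_lt h₁ h₂⟩, ?_⟩
        exact mul_mem_fcSet (FSer_normal G _)
          (fcSet_mono (FSer_mono (le_max_left _ _)) ha)
          (fcSet_mono (FSer_mono (le_max_right _ _)) hb)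
      inv_mem' := by
        rintro a ha
        obtain ⟨⟨γ₁, h₁⟩, ha⟩ := Set.mem_iUnion.mp ha
        exact Set.mem_iUnion.mpr ⟨⟨γ₁, h₁⟩, inv_mem_fcSet (FSer_normal G _) ha⟩ }
  haveI hSn : S.Normal := by
    constructor
    rintro a ha y
    obtain ⟨⟨γ₁, h₁⟩, ha⟩ := Set.mem_iUnion.mp ha
    exact Set.mem_iUnion.mpr ⟨⟨γ₁, h₁⟩, conj_mem_fcSet ha y⟩
  have hEq : FSer G o = S := by
    rw [FSer]
    refine le_antisymm (Subgroup.normalClosure_le_normal le_rfl) ?_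
    exact fun y hy => Subgroup.subset_normalClosure hy
  rw [hEq]
  change x ∈ (⋃ γ : {γ : Ordinal.{u} // γ < o}, fcSet (FSer G γ.1)) ↔ _
  rw [Set.mem_iUnion]
  exact ⟨fun ⟨⟨γ, hγ⟩, h⟩ => ⟨γ, hγ, h⟩, fun ⟨γ, hγ, h⟩ => ⟨⟨γ, hγ⟩, h⟩⟩

end Ser
section Stab

variable {G : Type u} [Group G]

/-- The FC-series eventually stabilizes. -/
lemma exists_fcSet_subset (G : Type u) [Group G] :
    ∃ o : Ordinal.{u}, fcSet (FSer G o) ⊆ (FSer G o : Set G) := by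
  by_contra hcon
  push_neg at hcon
  have hstrict : StrictMono (FSer G) := by
    intro o o' h
    obtain ⟨g, hg1, hg2⟩ := Set.not_subset.mp (hcon o)
    refine lt_of_le_of_ne (FSer_mono h.le) (fun hEq => ?_)
    exact hg2 (by rw [hEq]; exact fcSet_FSer_le h hg1)
  exact not_small_ordinal.{u, u} (small_of_injective hstrict.injective)

end Stab

section Compare

variable {G : Type u} [Group G]

/-- FC-sets compare well when passing to a subgroup. -/
lemma fcSet_subgroupOf {H : Subgroup G} {N : Subgroup G} {N' : Subgroup H}
    (hle : ∀ y : H, (y : G) ∈ N → y ∈ N') {x : H} (hx : (x : G) ∈ fcSet N) :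
    x ∈ fcSet N' := by
  classical
  obtain ⟨T, hT, hP⟩ := hx
  -- for each t, the set of z ∈ H whose conjugate is t-close
  let W : G → Set H := fun t => {z : H | t⁻¹ * ((z : G) * x * (z : G)⁻¹) ∈ N}
  let pick : G → H := fun t => if h : (W t).Nonempty then h.choose else 1
  refine ⟨(fun t => pick t * x * (pick t)⁻¹) '' T, hT.image _, fun z => ?_⟩
  obtain ⟨t, ht, hm⟩ := hP (z : G)
  have hWt : z ∈ W t := hm
  have hne : (W t).Nonempty := ⟨z, hWt⟩
  refine ⟨pick t * x * (pick t)⁻¹, ⟨t, ht, rfl⟩, ?_⟩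
  have hpick : pick t ∈ W t := by
    simp only [pick, dif_pos hne]
    exact hne.choose_spec
  apply hle
  push_cast
  set p : G := (pick t : G)
  have h1 : t⁻¹ * (p * x * p⁻¹) ∈ N := hpick
  have h2 : t⁻¹ * ((z : G) * x * (z : G)⁻¹) ∈ N := hm
  have key : (p * (x : G) * p⁻¹)⁻¹ * ((z : G) * x * (z : G)⁻¹)
      = (t⁻¹ * (p * x * p⁻¹))⁻¹ * (t⁻¹ * ((z : G) * x * (z : G)⁻¹)) := by group
  rw [key]
  exact N.mul_mem (N.inv_mem h1) h2

/-- The FC-series of the ambient group restricts into the FC-series of a subgroup. -/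
lemma FSer_subgroupOf_le (H : Subgroup G) : ∀ o : Ordinal.{u}, ∀ x : H,
    (x : G) ∈ FSer G o → x ∈ FSer H o := by
  intro o
  induction o using Ordinal.induction with
  | h o IH =>
    intro x hx
    rcases eq_or_ne o 0 with rfl | ho
    · rw [FSer_zero] at hx
      have hx1 : x = 1 := Subtype.ext (by exact hx)
      rw [hx1]
      exact Subgroup.one_mem _
    · obtain ⟨γ, hγ, hfc⟩ := (mem_FSer ho).mp hx
      have : x ∈ fcSet (FSer H γ) :=
        fcSet_subgroupOf (fun y hy => IH γ hγ y hy) hfc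
      exact fcSet_FSer_le hγ this

end Compare
section Centralizer

variable {J : Type u} [Group J]

/-- Descend the conjugation map to the coset space of the centralizer. -/
noncomputable def conjMap (g : J) : J ⧸ Subgroup.centralizer {g} → J :=
  fun q => Quotient.liftOn' q (fun x => x * g * x⁻¹) (by
    intro a b hab
    rw [QuotientGroup.leftRel_apply] at hab
    have hc : g * (a⁻¹ * b) = (a⁻¹ * b) * g := by
      have := Subgroup.mem_centralizer_iff.mp hab
      simpa using this g rfl
    have : a * g * a⁻¹ = b * g * b⁻¹ := by
      have h2 : a * (g * (a⁻¹ * b)) * b⁻¹ = a * ((a⁻¹ * b) * g) * b⁻¹ := by rw [hc]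
      calc a * g * a⁻¹ = a * (g * (a⁻¹ * b)) * b⁻¹ := by group
        _ = a * ((a⁻¹ * b) * g) * b⁻¹ := h2
        _ = b * g * b⁻¹ := by group
    exact this)

lemma conjMap_mk (g x : J) : conjMap g (QuotientGroup.mk x) = x * g * x⁻¹ := rfl

lemma conjMap_injective (g : J) : Function.Injective (conjMap g) := by
  intro a b
  refine Quotient.inductionOn₂' a b (fun x y h => ?_)
  have h' : x * g * x⁻¹ = y * g * y⁻¹ := h
  apply Quotient.sound'
  rw [QuotientGroup.leftRel_apply]
  rw [Subgroup.mem_centralizer_iff]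
  intro z hz
  rw [Set.mem_singleton_iff] at hz
  rw [hz]
  have : g * (x⁻¹ * y) = x⁻¹ * (x * g * x⁻¹) * y := by group
  rw [this, h']
  group

lemma range_conjMap (g : J) : Set.range (conjMap g) = conjClassSet g := by
  ext h
  constructor
  · rintro ⟨q, rfl⟩
    obtain ⟨x, rfl⟩ := QuotientGroup.mk_surjective q
    exact ⟨x, rfl⟩
  · rintro ⟨x, rfl⟩
    exact ⟨QuotientGroup.mk x, rfl⟩

/-- Finite conjugacy class iff the centralizer has finite index. -/
lemma finiteIndex_centralizer_of_finite {g : J} (h : (conjClassSet g).Finite) :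
    (Subgroup.centralizer {g}).FiniteIndex := by
  have : Finite (J ⧸ Subgroup.centralizer {g}) := by
    have hfin : (Set.range (conjMap g)).Finite := by rw [range_conjMap]; exact h
    haveI := hfin.to_subtype
    exact Finite.of_injective (Set.rangeFactorization (conjMap g))
      (fun a b hab => conjMap_injective g (congrArg Subtype.val hab))
  exact ⟨Subgroup.index_ne_zero_of_finite⟩

lemma finite_conjClassSet_of_finiteIndex {g : J}
    (h : (Subgroup.centralizer {g}).FiniteIndex) : (conjClassSet g).Finite := by
  haveI := h
  rw [← range_conjMap]
  exact Set.finite_range _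

/-- Centralizer of a finite set of elements with finite classes has finite index. -/
lemma finiteIndex_centralizer_of_finite_set {T : Set J} (hT : T.Finite)
    (hcls : ∀ t ∈ T, (conjClassSet t).Finite) :
    (Subgroup.centralizer T).FiniteIndex := by
  classical
  revert hcls
  refine Set.Finite.induction_on T hT ?_ ?_
  · intro _
    have : Subgroup.centralizer (∅ : Set J) = ⊤ := by
      ext x; simp [Subgroup.mem_centralizer_iff]
    rw [this]; infer_instance
  · intro a s hnot hfin IH hcls
    have hsplit : Subgroup.centralizer (insert a s) =
        Subgroup.centralizer {a} ⊓ Subgroup.centralizer s := by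
      ext x
      simp [Subgroup.mem_centralizer_iff, Subgroup.mem_inf, forall_and]
    rw [hsplit]
    haveI h1 : (Subgroup.centralizer {a}).FiniteIndex :=
      finiteIndex_centralizer_of_finite (hcls a (Set.mem_insert _ _))
    haveI h2 : (Subgroup.centralizer s).FiniteIndex :=
      IH (fun t ht => hcls t (Set.mem_insert_of_mem _ ht))
    infer_instance

lemma conjClassSet_conj (g y : J) : conjClassSet (y * g * y⁻¹) = conjClassSet g := by
  ext h
  constructor
  · rintro ⟨x, rfl⟩
    exact ⟨x * y, by group⟩
  · rintro ⟨x, rfl⟩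
    exact ⟨x * y⁻¹, by group⟩

end Centralizer
section CommutatorLemmas

variable {G : Type u} [Group G]

/-- Key commutator lemma: if `G = ⟨X⟩` then `⁅normalClosure S, ⊤⁆` is contained in the
normal closure of the commutators `⁅s, x⁆`. -/
lemma commutator_normalClosure_le {X S : Set G} (hX : Subgroup.closure X = ⊤) :
    ⁅Subgroup.normalClosure S, (⊤ : Subgroup G)⁆ ≤
      Subgroup.normalClosure (Set.image2 (fun s x => ⁅s, x⁆) S X) := by
  set M := Subgroup.normalClosure (Set.image2 (fun s x => ⁅s, x⁆) S X) with hM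
  haveI : M.Normal := Subgroup.normalClosure_normal
  set π := QuotientGroup.mk' M with hπ
  have hπsurj : Function.Surjective π := QuotientGroup.mk'_surjective M
  have hker : π.ker = M := QuotientGroup.ker_mk' M
  rw [← hker, ← Subgroup.map_eq_bot_iff]
  rw [Subgroup.map_commutator]
  have htop : Subgroup.map π ⊤ = ⊤ := by
    rw [← MonoidHom.range_eq_map]
    exact MonoidHom.range_eq_top_of_surjective π hπsurj
  rw [htop, Subgroup.map_normalClosure _ _ hπsurj]
  have hcen : Subgroup.normalClosure (π '' S) ≤ Subgroup.center (G ⧸ M) := by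
    refine Subgroup.normalClosure_le_normal ?_
    rintro q ⟨s, hs, rfl⟩
    rw [SetLike.mem_coe, Subgroup.mem_center_iff]
    intro g
    have hgen : ∀ x ∈ X, π s * π x = π x * π s := by
      intro x hx
      have hmem : ⁅s, x⁆ ∈ M :=
        Subgroup.subset_normalClosure (Set.mem_image2_of_mem hs hx)
      have h1 : ⁅π s, π x⁆ = 1 := by
        rw [← map_commutatorElement]
        have : ⁅s, x⁆ ∈ π.ker := by rwa [hker]
        rwa [MonoidHom.mem_ker] at this
      exact commutatorElement_eq_one_iff_commute.mp h1
    have hle : Subgroup.closure (π '' X) ≤ Subgroup.centralizer {π s} := by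
      rw [Subgroup.closure_le]
      rintro q' ⟨x, hx, rfl⟩
      rw [SetLike.mem_coe, Subgroup.mem_centralizer_iff]
      rintro h hh
      rw [Set.mem_singleton_iff] at hh
      rw [hh]
      exact hgen x hx
    have hclos : Subgroup.closure (π '' X) = ⊤ := by
      rw [← MonoidHom.map_closure, hX]
      exact htop
    rw [hclos] at hle
    have hg := hle (Subgroup.mem_top g)
    rw [Subgroup.mem_centralizer_iff] at hg
    exact (hg (π s) rfl).symm
  rw [eq_bot_iff]
  calc ⁅Subgroup.normalClosure (π '' S), (⊤ : Subgroup (G ⧸ M))⁆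
      ≤ ⁅Subgroup.center (G ⧸ M), (⊤ : Subgroup (G ⧸ M))⁆ :=
        Subgroup.commutator_mono hcen le_rfl
    _ ≤ ⊥ := by
        rw [le_bot_iff, Subgroup.commutator_eq_bot_iff_le_centralizer, Subgroup.coe_top,
          Subgroup.centralizer_univ]

/-- Iterated left-normed commutator words in a generating set. -/
def commWords (X : Set G) : ℕ → Set G
  | 0 => X
  | (k + 1) => Set.image2 (fun d x => ⁅d, x⁆) (commWords X k) X

lemma commWords_finite {X : Set G} (hX : X.Finite) : ∀ k, (commWords X k).Finite
  | 0 => hX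
  | (k + 1) => Set.Finite.image2 _ (commWords_finite hX k) hX

lemma commWords_subset_lcs (X : Set G) : ∀ k, commWords X k ⊆ Subgroup.lowerCentralSeries (⊤ : Subgroup G) k
  | 0 => fun x _ => Subgroup.mem_top x
  | (k + 1) => by
      rintro c hc
      obtain ⟨d, hd, x, hx, rfl⟩ := Set.mem_image2.mp hc
      exact Subgroup.commutator_mem_commutator (commWords_subset_lcs X k hd)
        (Subgroup.mem_top x)

lemma lcs_le_normalClosure_commWords {X : Set G} (hX : Subgroup.closure X = ⊤) :
    ∀ k, Subgroup.lowerCentralSeries (⊤ : Subgroup G) k ≤ Subgroup.normalClosure (commWords X k)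
  | 0 => by
      rw [Subgroup.lowerCentralSeries_zero, ← hX]
      exact le_trans Subgroup.closure_le_normalClosure le_rfl
  | (k + 1) => by
      calc Subgroup.lowerCentralSeries (⊤ : Subgroup G) (k + 1) = ⁅Subgroup.lowerCentralSeries (⊤ : Subgroup G) k, ⊤⁆ := rfl
        _ ≤ ⁅Subgroup.normalClosure (commWords X k), ⊤⁆ :=
            Subgroup.commutator_mono (lcs_le_normalClosure_commWords hX k) le_rfl
        _ ≤ Subgroup.normalClosure (commWords X (k + 1)) :=
            commutator_normalClosure_le hX

end CommutatorLemmas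

section NilpotentCenter

/-- A nontrivial nilpotent group has a nontrivial center. -/
lemma exists_ne_one_mem_center (M : Type*) [Group M] [Group.IsNilpotent M]
    [Nontrivial M] : ∃ z : M, z ∈ Subgroup.center M ∧ z ≠ 1 := by
  classical
  have hex : ∃ n, Subgroup.lowerCentralSeries (⊤ : Subgroup M) n = ⊥ := Subgroup.nilpotent_iff_lowerCentralSeries.mp ‹_›
  have hbot : Subgroup.lowerCentralSeries (⊤ : Subgroup M) (Nat.find hex) = ⊥ := Nat.find_spec hex
  have hn0 : Nat.find hex ≠ 0 := by
    intro h
    rw [h, Subgroup.lowerCentralSeries_zero] at hbot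
    obtain ⟨x, y, hxy⟩ := exists_pair_ne M
    exact hxy (by
      have hx : x ∈ (⊥ : Subgroup M) := hbot ▸ Subgroup.mem_top x
      have hy : y ∈ (⊥ : Subgroup M) := hbot ▸ Subgroup.mem_top y
      rw [Subgroup.mem_bot] at hx hy
      rw [hx, hy])
  obtain ⟨m, hm⟩ := Nat.exists_eq_succ_of_ne_zero hn0
  have hne : Subgroup.lowerCentralSeries (⊤ : Subgroup M) m ≠ ⊥ := Nat.find_min hex (by omega)
  have hcomm : ⁅Subgroup.lowerCentralSeries (⊤ : Subgroup M) m, (⊤ : Subgroup M)⁆ = ⊥ := by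
    rw [hm] at hbot
    exact hbot
  have hcen : Subgroup.lowerCentralSeries (⊤ : Subgroup M) m ≤ Subgroup.center M := by
    have h := Subgroup.commutator_eq_bot_iff_le_centralizer.mp hcomm
    rwa [Subgroup.coe_top, Subgroup.centralizer_univ] at h
  rcases Subgroup.bot_or_exists_ne_one (Subgroup.lowerCentralSeries (⊤ : Subgroup M) m) with h | ⟨z, hz, hz1⟩
  · exact absurd h hne
  · exact ⟨z, hcen hz, hz1⟩

end NilpotentCenter

section Transfer

variable {G : Type u} [Group G]

/-- Virtual nilpotence passes from a finite-index subgroup to the whole group. -/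
lemma transfer_virtnilp (H : Subgroup G) (hH : H.FiniteIndex)
    (K : Subgroup H) (hK : K.FiniteIndex) (hnil : Group.IsNilpotent K) :
    ∃ N : Subgroup G, N.FiniteIndex ∧ Group.IsNilpotent N := by
  refine ⟨K.map H.subtype, ?_, ?_⟩
  · constructor
    have hle : K.map H.subtype ≤ H := Subgroup.map_subtype_le K
    have hmul := Subgroup.relIndex_mul_index hle
    have hrel : (K.map H.subtype).relIndex H = K.index := by
      rw [Subgroup.relIndex]
      congr 1
      rw [Subgroup.subgroupOf]
      exact Subgroup.comap_map_eq_self_of_injective H.subtype_injective K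
    rw [← hmul, hrel]
    exact Nat.mul_ne_zero hK.index_ne_zero hH.index_ne_zero
  · have e := Subgroup.equivMapOfInjective K H.subtype H.subtype_injective
    exact nilpotent_of_surjective e.toMonoidHom e.surjective

end Transfer
section Main

/-- Main induction: a f.g. group whose lower central series enters the transfinite
FC-central series is virtually nilpotent. -/
theorem virtnilp_of_lcs_le_FSer (o : Ordinal.{u}) :
    ∀ (G : Type u) [inst : Group G], Group.FG G → ∀ k : ℕ,
      Subgroup.lowerCentralSeries (⊤ : Subgroup G) k ≤ FSer G o →
      ∃ N : Subgroup G, N.FiniteIndex ∧ Group.IsNilpotent N := by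
  induction o using Ordinal.induction with
  | h o IH =>
    intro G instG hfg k hk
    classical
    obtain ⟨X, hX, hXfin⟩ := Group.fg_iff.mp hfg
    have nilpcase : Subgroup.lowerCentralSeries (⊤ : Subgroup G) k ≤ ⊥ →
        ∃ N : Subgroup G, N.FiniteIndex ∧ Group.IsNilpotent N := by
      intro hbot
      haveI : Group.IsNilpotent G :=
        Subgroup.nilpotent_iff_lowerCentralSeries.mpr ⟨k, le_bot_iff.mp hbot⟩
      refine ⟨⊤, inferInstance, ?_⟩
      have e := (Subgroup.topEquiv (G := G)).symm
      exact nilpotent_of_surjective e.toMonoidHom (EquivLike.surjective e)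
    rcases eq_or_ne o 0 with rfl | h0
    · rw [FSer_zero] at hk
      exact nilpcase hk
    rcases Set.eq_empty_or_nonempty (commWords X k) with hD | hD
    · refine nilpcase ?_
      refine le_trans (lcs_le_normalClosure_commWords hX k) ?_
      rw [hD]
      exact Subgroup.normalClosure_le_normal (Set.empty_subset _)
    -- choose a single level γ < o which contains all commutator words
    have hmem : ∀ d ∈ commWords X k, ∃ γ, γ < o ∧ d ∈ fcSet (FSer G γ) := by
      intro d hd
      obtain ⟨γ, hγ, h⟩ := (mem_FSer h0).mp (hk (commWords_subset_lcs X k hd))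
      exact ⟨γ, hγ, h⟩
    choose! γf hγf1 hγf2 using hmem
    have hfin := commWords_finite hXfin k
    set γ : Ordinal.{u} := hfin.toFinset.sup γf with hγdef
    have hγlt : γ < o := by
      rw [hγdef, Finset.sup_lt_iff (pos_iff_ne_zero.mpr h0)]
      intro d hd
      exact hγf1 d (hfin.mem_toFinset.mp hd)
    have hall : ∀ d ∈ commWords X k, d ∈ fcSet (FSer G γ) := by
      intro d hd
      exact fcSet_mono (FSer_mono (Finset.le_sup (hfin.mem_toFinset.mpr hd)))
        (hγf2 d hd)
    set N := FSer G γ with hNdef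
    haveI : N.Normal := FSer_normal G γ
    set π := QuotientGroup.mk' N with hπdef
    set T : Set (G ⧸ N) := ⋃ d ∈ commWords X k, conjClassSet (π d) with hTdef
    have hTfin : T.Finite := by
      refine Set.Finite.biUnion hfin (fun d hd => ?_)
      have : π d = ((d : G) : G ⧸ N) := rfl
      rw [this, conjClassSet_mk]
      exact (fcSet_iff_finite N d).mp (hall d hd)
    have hTcls : ∀ t ∈ T, (conjClassSet t).Finite := by
      intro t ht
      rw [hTdef, Set.mem_iUnion₂] at ht
      obtain ⟨d, hd, htd⟩ := ht
      obtain ⟨y, rfl⟩ := htd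
      rw [conjClassSet_conj]
      have : π d = ((d : G) : G ⧸ N) := rfl
      rw [this, conjClassSet_mk]
      exact (fcSet_iff_finite N d).mp (hall d hd)
    set C := Subgroup.centralizer T with hCdef
    haveI hCfi : C.FiniteIndex := finiteIndex_centralizer_of_finite_set hTfin hTcls
    set H := C.comap π with hHdef
    haveI hHfi : H.FiniteIndex := by
      constructor
      rw [hHdef, Subgroup.index_comap_of_surjective _ (QuotientGroup.mk'_surjective N)]
      exact hCfi.index_ne_zero
    haveI hfgG : Group.FG G := hfg
    haveI hHfg : Group.FG H := Subgroup.fg_of_index_ne_zero H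
    have hkey : Subgroup.lowerCentralSeries (⊤ : Subgroup H) (k + 1) ≤ FSer H γ := by
      have h1 : Subgroup.map H.subtype (Subgroup.lowerCentralSeries (⊤ : Subgroup H) (k + 1)) ≤
          ⁅Subgroup.lowerCentralSeries (⊤ : Subgroup G) k, H⁆ := by
        have heq : Subgroup.map H.subtype (Subgroup.lowerCentralSeries (⊤ : Subgroup H) (k + 1)) =
            ⁅Subgroup.map H.subtype (Subgroup.lowerCentralSeries (⊤ : Subgroup H) k),
              Subgroup.map H.subtype ⊤⁆ := by
          rw [show Subgroup.lowerCentralSeries (⊤ : Subgroup H) (k + 1) = ⁅Subgroup.lowerCentralSeries (⊤ : Subgroup H) k, ⊤⁆ from rfl,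
            Subgroup.map_commutator]
        rw [heq]
        refine Subgroup.commutator_mono (Subgroup.lowerCentralSeries_map_subtype_le H k) ?_
        rw [← MonoidHom.range_eq_map, Subgroup.range_subtype]
      have h2 : Subgroup.map π ⁅Subgroup.lowerCentralSeries (⊤ : Subgroup G) k, H⁆ = ⊥ := by
        rw [Subgroup.map_commutator, eq_bot_iff]
        have hA : Subgroup.map π (Subgroup.lowerCentralSeries (⊤ : Subgroup G) k) ≤
            Subgroup.normalClosure (π '' commWords X k) := by
          rw [← Subgroup.map_normalClosure _ _ (QuotientGroup.mk'_surjective N)]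
          exact Subgroup.map_mono (lcs_le_normalClosure_commWords hX k)
        have hB : Subgroup.map π H ≤ C := Subgroup.map_comap_le π C
        have hC : Subgroup.normalClosure (π '' commWords X k) ≤
            Subgroup.centralizer (C : Set (G ⧸ N)) := by
          show Subgroup.closure (Group.conjugatesOfSet (π '' commWords X k)) ≤ _
          rw [Subgroup.closure_le]
          intro a ha
          rw [Group.mem_conjugatesOfSet_iff] at ha
          obtain ⟨b, hb, hconj⟩ := ha
          obtain ⟨d, hd, rfl⟩ := hb
          obtain ⟨c, rfl⟩ := isConj_iff.mp hconj
          have haT : c * π d * c⁻¹ ∈ T := by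
            rw [hTdef, Set.mem_iUnion₂]
            exact ⟨d, hd, ⟨c, rfl⟩⟩
          rw [SetLike.mem_coe, Subgroup.mem_centralizer_iff]
          intro h hh
          exact ((Subgroup.mem_centralizer_iff.mp hh) _ haT).symm
        calc ⁅Subgroup.map π (Subgroup.lowerCentralSeries (⊤ : Subgroup G) k), Subgroup.map π H⁆
            ≤ ⁅Subgroup.normalClosure (π '' commWords X k), C⁆ :=
              Subgroup.commutator_mono hA hB
          _ ≤ ⊥ := by
              rw [le_bot_iff, Subgroup.commutator_eq_bot_iff_le_centralizer]
              exact hC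
      have h3 : ⁅Subgroup.lowerCentralSeries (⊤ : Subgroup G) k, H⁆ ≤ N := by
        have := (Subgroup.map_eq_bot_iff _).mp h2
        rwa [QuotientGroup.ker_mk'] at this
      have h4 : Subgroup.lowerCentralSeries (⊤ : Subgroup H) (k + 1) ≤ Subgroup.comap H.subtype N :=
        Subgroup.map_le_iff_le_comap.mp (le_trans h1 h3)
      intro x hx
      exact FSer_subgroupOf_le H γ x (h4 hx)
    obtain ⟨K, hKfi, hKnil⟩ := IH γ hγlt H hHfg (k + 1) hkey
    exact transfer_virtnilp H hHfi K hKfi hKnil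

end Main
/-- A finitely generated group is virtually nilpotent iff it has no nontrivial ICC
quotient. -/
theorem fg_virtually_nilpotent_iff_no_icc_quotient (G : Type u) [Group G]
    (hfg : Group.FG G) :
    (∃ N : Subgroup G, N.FiniteIndex ∧ Group.IsNilpotent N) ↔
      ¬ ∃ (J : Type u) (_ : Group J) (τ : G →* J),
          Function.Surjective τ ∧ IsICC J ∧ Nontrivial J := by
  constructor
  · rintro ⟨N, hNfi, hNnil⟩ ⟨J, instJ, τ, hτ, hicc, hnontriv⟩
    haveI : Nontrivial J := hnontriv
    obtain ⟨g0, hg0⟩ := exists_ne (1 : J)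
    haveI hinf : Infinite J :=
      Set.infinite_univ_iff.mp ((hicc g0 hg0).mono (Set.subset_univ _))
    set M := N.map τ with hM
    haveI hMfi : M.FiniteIndex := by
      constructor
      have h1 : N ≤ M.comap τ := fun x hx =>
        Subgroup.mem_comap.mpr (Subgroup.mem_map_of_mem τ hx)
      have h2 : (M.comap τ).index ∣ N.index := Subgroup.index_dvd_of_le h1
      have h3 : M.index = (M.comap τ).index :=
        (Subgroup.index_comap_of_surjective M hτ).symm
      rw [h3]
      intro h0
      rw [h0] at h2
      exact hNfi.index_ne_zero (zero_dvd_iff.mp h2)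
    haveI hMnil : Group.IsNilpotent M :=
      nilpotent_of_surjective (τ.subgroupMap N) (τ.subgroupMap_surjective N)
    haveI hMinf : Infinite M := by
      by_contra hfinM
      rw [not_infinite_iff_finite] at hfinM
      haveI := hfinM
      haveI : Finite (J ⧸ M) := Subgroup.finite_quotient_of_finiteIndex
      have hfinJ : Finite J :=
        Finite.of_equiv _ (Subgroup.groupEquivQuotientProdSubgroup (s := M)).symm
      exact not_finite J
    haveI : Nontrivial M := inferInstance
    obtain ⟨z, hzc, hz1⟩ := exists_ne_one_mem_center M
    have hζ1 : (z : J) ≠ 1 := fun h => hz1 (OneMemClass.coe_eq_one.mp h)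
    have hle : M ≤ Subgroup.centralizer {(z : J)} := by
      intro m hm
      rw [Subgroup.mem_centralizer_iff]
      rintro h hh
      rw [Set.mem_singleton_iff] at hh
      rw [hh]
      have hz2 := (Subgroup.mem_center_iff.mp hzc) ⟨m, hm⟩
      have h2 := congrArg (Subtype.val) hz2
      push_cast at h2
      exact h2.symm
    haveI hcfi : (Subgroup.centralizer {(z : J)}).FiniteIndex := by
      constructor
      have hdvd := Subgroup.index_dvd_of_le hle
      intro h0
      rw [h0] at hdvd
      exact hMfi.index_ne_zero (zero_dvd_iff.mp hdvd)
    exact (hicc _ hζ1) (finite_conjClassSet_of_finiteIndex hcfi)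
  · intro hno
    obtain ⟨o, ho⟩ := exists_fcSet_subset G
    rcases eq_or_ne (FSer G o) ⊤ with htop | hne
    · refine virtnilp_of_lcs_le_FSer o G hfg 0 ?_
      rw [Subgroup.lowerCentralSeries_zero, htop]
    · exfalso
      apply hno
      haveI : (FSer G o).Normal := FSer_normal G o
      refine ⟨G ⧸ FSer G o, inferInstance, QuotientGroup.mk' _,
        QuotientGroup.mk'_surjective _, quotient_isICC _ ho, ?_⟩
      obtain ⟨g, hg⟩ : ∃ g, g ∉ FSer G o := by
        by_contra hall
        push_neg at hall
        exact hne ((Subgroup.eq_top_iff' _).mpr hall)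
      exact ⟨⟨QuotientGroup.mk g, 1,
        fun h => hg (by rwa [QuotientGroup.eq_one_iff] at h)⟩⟩
end

section
/- A finitely generated group G that is not virtually nilpotent admits a surjective homomorphism onto a nontrivial group J in which every nonidentity element has an infinite conjugacy class. -/
universe u

open Subgroup
open scoped commutatorElement

/-- Virtually nilpotent. -/
def VN (Q : Type*) [Group Q] : Prop :=
  ∃ H : Subgroup Q, H.FiniteIndex ∧ Group.IsNilpotent H

lemma VN.of_mulEquiv {Q : Type*} {Q' : Type*} [Group Q] [Group Q'] (e : Q ≃* Q')
    (hv : VN Q) : VN Q' := by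
  obtain ⟨H, hfi, hnil⟩ := hv
  refine ⟨H.map (e : Q →* Q'), ?_, ?_⟩
  · constructor
    rw [Subgroup.map_equiv_eq_comap_symm e H]
    rw [Subgroup.index_comap_of_surjective _ e.symm.surjective]
    exact hfi.index_ne_zero
  · haveI := hnil
    exact nilpotent_of_mulEquiv (Subgroup.equivMapOfInjective H (e : Q →* Q') (EquivLike.injective e))

lemma lcs_le_map_surjective {Γ : Type*} {Γ' : Type*} [Group Γ] [Group Γ'] {f : Γ →* Γ'}
    (hf : Function.Surjective f) (n : ℕ) :
    Subgroup.lowerCentralSeries (⊤ : Subgroup Γ') n ≤ Subgroup.map f (Subgroup.lowerCentralSeries (⊤ : Subgroup Γ) n) := by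
  induction n with
  | zero =>
      show (⊤ : Subgroup Γ') ≤ Subgroup.map f ⊤
      rw [Subgroup.map_top_of_surjective f hf]
  | succ n ih =>
      show ⁅Subgroup.lowerCentralSeries (⊤ : Subgroup Γ') n, (⊤ : Subgroup Γ')⁆ ≤ _
      calc ⁅Subgroup.lowerCentralSeries (⊤ : Subgroup Γ') n, (⊤ : Subgroup Γ')⁆
          ≤ ⁅Subgroup.map f (Subgroup.lowerCentralSeries (⊤ : Subgroup Γ) n), Subgroup.map f ⊤⁆ := by
            rw [Subgroup.map_top_of_surjective f hf]
            exact Subgroup.commutator_mono ih le_rfl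
        _ = Subgroup.map f ⁅Subgroup.lowerCentralSeries (⊤ : Subgroup Γ) n, ⊤⁆ :=
            (Subgroup.map_commutator _ _ _).symm

/-- Iterated commutator sets of a generating set. -/
def commSets {Γ : Type*} [Group Γ] (X : Set Γ) : ℕ → Set Γ
  | 0 => X
  | n + 1 => (fun p : Γ × Γ => ⁅p.1, p.2⁆) '' ((commSets X n) ×ˢ X)

lemma commSets_finite {Γ : Type*} [Group Γ] {X : Set Γ} (hX : X.Finite) (n : ℕ) :
    (commSets X n).Finite := by
  induction n with
  | zero => exact hX
  | succ n ih => exact (ih.prod hX).image _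

lemma commSets_subset_lcs {Γ : Type*} [Group Γ] (X : Set Γ) (n : ℕ) :
    commSets X n ⊆ Subgroup.lowerCentralSeries (⊤ : Subgroup Γ) n := by
  induction n with
  | zero => exact fun x _ => Subgroup.mem_top x
  | succ n ih =>
      rintro x ⟨⟨a, b⟩, ⟨ha, _⟩, rfl⟩
      exact Subgroup.commutator_mem_commutator (ih ha) (Subgroup.mem_top b)

lemma lcs_le_normalClosure_commSets {Γ : Type*} [Group Γ] {X : Set Γ}
    (hX : Subgroup.closure X = ⊤) (n : ℕ) :
    Subgroup.lowerCentralSeries (⊤ : Subgroup Γ) n ≤ Subgroup.normalClosure (commSets X n) := by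
  induction n with
  | zero =>
      show (⊤ : Subgroup Γ) ≤ _
      rw [← hX]
      exact le_trans ((Subgroup.closure_le _).2 Subgroup.subset_normalClosure) le_rfl
  | succ n ih =>
      set M := Subgroup.normalClosure (commSets X (n + 1)) with hM
      haveI : M.Normal := Subgroup.normalClosure_normal
      set π := QuotientGroup.mk' M with hπ
      have hsurj : Function.Surjective π := QuotientGroup.mk'_surjective M
      rw [← QuotientGroup.ker_mk' M, ← Subgroup.map_eq_bot_iff]
      show Subgroup.map π ⁅Subgroup.lowerCentralSeries (⊤ : Subgroup Γ) n, ⊤⁆ = ⊥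
      rw [Subgroup.map_commutator, Subgroup.map_top_of_surjective π hsurj]
      -- image of lcs n is central
      have hcen : Subgroup.map π (Subgroup.lowerCentralSeries (⊤ : Subgroup Γ) n) ≤ Subgroup.center (Γ ⧸ M) := by
        refine le_trans (Subgroup.map_mono ih) ?_
        rw [Subgroup.map_normalClosure _ _ hsurj]
        refine Subgroup.normalClosure_le_normal ?_
        rintro y ⟨a, ha, rfl⟩
        rw [SetLike.mem_coe, Subgroup.mem_center_iff]
        intro q
        obtain ⟨b, rfl⟩ := hsurj q
        have htop : Subgroup.closure ((π : Γ →* Γ ⧸ M) '' X) = ⊤ := by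
          rw [← MonoidHom.map_closure, hX, Subgroup.map_top_of_surjective π hsurj]
        have hb : π b ∈ Subgroup.closure ((π : Γ →* Γ ⧸ M) '' X) := by
          rw [htop]; exact Subgroup.mem_top _
        refine Subgroup.closure_induction (p := fun q _ => q * π a = π a * q) ?_ ?_ ?_ ?_ hb
        · rintro q ⟨x, hx, rfl⟩
          have hmem : ⁅a, x⁆ ∈ M := Subgroup.subset_normalClosure ⟨⟨a, x⟩, ⟨ha, hx⟩, rfl⟩
          have h1 : π ⁅a, x⁆ = 1 := by
            rw [← QuotientGroup.ker_mk' M] at hmem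
            exact hmem
          have h2 : ⁅π a, π x⁆ = 1 := by
            rw [← map_commutatorElement]; exact h1
          exact (commutatorElement_eq_one_iff_mul_comm.mp h2).symm
        · simp
        · intro p q _ _ hp hq
          rw [mul_assoc, hq, ← mul_assoc, hp, mul_assoc]
        · intro p _ hp
          have := hp.symm
          calc p⁻¹ * π a = p⁻¹ * π a * p * p⁻¹ := by group
            _ = p⁻¹ * (p * π a) * p⁻¹ := by rw [← this]; group
            _ = π a * p⁻¹ := by group
      rw [eq_bot_iff]
      refine le_trans (Subgroup.commutator_mono hcen le_rfl) ?_
      rw [Subgroup.commutator_le]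
      intro g₁ hg₁ g₂ _
      rw [Subgroup.mem_bot, commutatorElement_def]
      rw [Subgroup.mem_center_iff] at hg₁
      rw [← hg₁ g₂]
      group


lemma VN_def {Q : Type*} [Group Q] :
    VN Q ↔ ∃ H : Subgroup Q, H.FiniteIndex ∧ Group.IsNilpotent H := Iff.rfl

lemma finite_subset_chain {G : Type u} [Group G] {c : Set (Subgroup G)}
    (hchain : IsChain (· ≤ ·) c) (hne : c.Nonempty) {T : Set G} (hT : T.Finite)
    (hsub : T ⊆ (sSup c : Subgroup G)) : ∃ N ∈ c, T ⊆ N := by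
  revert hsub
  refine Set.Finite.induction_on (motive := fun T _ => T ⊆ ↑(sSup c) → ∃ N ∈ c, T ⊆ ↑N) T hT ?_ ?_
  · exact fun _ => ⟨hne.choose, hne.choose_spec, by simp⟩
  · intro a T ha hTfin ih hsub
    obtain ⟨N, hN, hTN⟩ := ih (fun x hx => hsub (Set.mem_insert_of_mem a hx))
    have haS : a ∈ sSup c := hsub (Set.mem_insert a T)
    rw [Subgroup.mem_sSup_of_directedOn hne hchain.directedOn] at haS
    obtain ⟨N', hN', haN'⟩ := haS
    rcases hchain.total hN hN' with hle | hle
    · exact ⟨N', hN', Set.insert_subset_iff.mpr ⟨haN', fun x hx => hle (hTN hx)⟩⟩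
    · exact ⟨N, hN, Set.insert_subset_iff.mpr ⟨hle haN', hTN⟩⟩

/-- `N` is a normal subgroup with non-virtually-nilpotent quotient. -/
def BadN {G : Type u} [Group G] (N : Subgroup G) : Prop :=
  ∃ h : N.Normal, ¬ @VN (G ⧸ N) (@QuotientGroup.Quotient.group G _ N h)

lemma chain_ub_not_VN {G : Type u} [Group G] [Group.FG G] {c : Set (Subgroup G)}
    (hchain : IsChain (· ≤ ·) c) (hne : c.Nonempty)
    (hmem : ∀ N ∈ c, BadN N) :
    BadN (sSup c) := by
  have hnorm : (sSup c).Normal := by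
    constructor
    intro n hn x
    rw [Subgroup.mem_sSup_of_directedOn hne hchain.directedOn] at hn ⊢
    obtain ⟨N, hN, hnN⟩ := hn
    exact ⟨N, hN, (hmem N hN).1.conj_mem n hnN x⟩
  refine ⟨hnorm, ?_⟩
  haveI := hnorm
  rw [VN_def]
  rintro ⟨H₀, hfi, hnil⟩
  set Nb := sSup c with hNb
  set π := QuotientGroup.mk' Nb with hπ
  have hπs : Function.Surjective π := QuotientGroup.mk'_surjective Nb
  set Ht : Subgroup G := Subgroup.comap π H₀ with hHt
  have hker : Nb ≤ Ht := by
    intro x hx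
    have hx1 : π x = 1 := (QuotientGroup.eq_one_iff x).mpr hx
    show π x ∈ H₀
    rw [hx1]; exact H₀.one_mem
  have hHtidx : Ht.index = H₀.index := Subgroup.index_comap_of_surjective _ hπs
  haveI hHtfi : Ht.FiniteIndex := ⟨by rw [hHtidx]; exact hfi.index_ne_zero⟩
  haveI : Group.FG (↥Ht) := Subgroup.fg_of_index_ne_zero Ht
  obtain ⟨X, hXtop, hXfin⟩ := Group.fg_iff.mp (by infer_instance : Group.FG (↥Ht))
  -- the map from Ht to H₀
  have hmemH₀ : ∀ x : ↥Ht, π (x : G) ∈ H₀ := fun x => x.2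
  set ψ : ↥Ht →* ↥H₀ := MonoidHom.codRestrict (π.comp Ht.subtype) H₀ hmemH₀ with hψ
  have hψs : Function.Surjective ψ := by
    intro y
    have : (y : G ⧸ Nb) ∈ Subgroup.map π Ht := by
      rw [hHt, Subgroup.map_comap_eq_self_of_surjective hπs]
      exact y.2
    obtain ⟨x, hx, hxy⟩ := this
    exact ⟨⟨x, hx⟩, Subtype.ext hxy⟩
  obtain ⟨n, hn⟩ := Subgroup.nilpotent_iff_lowerCentralSeries.mp hnil
  -- lcs of Ht maps into Nb
  have hlcs : ∀ x : ↥Ht, x ∈ Subgroup.lowerCentralSeries (⊤ : Subgroup (↥Ht)) n → (x : G) ∈ Nb := by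
    intro x hx
    have : ψ x ∈ Subgroup.map ψ (Subgroup.lowerCentralSeries (⊤ : Subgroup (↥Ht)) n) :=
      Subgroup.mem_map_of_mem ψ hx
    have h2 : ψ x ∈ Subgroup.lowerCentralSeries (⊤ : Subgroup (↥H₀)) n := Subgroup.lowerCentralSeries.map ψ n this
    rw [hn, Subgroup.mem_bot] at h2
    have : π (x : G) = 1 := by
      have := congrArg (Subtype.val) h2
      exact this
    exact (QuotientGroup.eq_one_iff _).mp this
  -- finite set detecting nilpotency
  set T : Set G := (Ht.subtype) '' (commSets X n) with hT
  have hTfin : T.Finite := (commSets_finite hXfin n).image _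
  have hTsub : T ⊆ (Nb : Subgroup G) := by
    rintro t ⟨x, hx, rfl⟩
    exact hlcs x (commSets_subset_lcs X n hx)
  obtain ⟨Nj, hNjc, hTNj⟩ := finite_subset_chain hchain hne hTfin hTsub
  haveI hNjnorm : Nj.Normal := (hmem Nj hNjc).1
  -- lcs of Ht lands in Nj
  have hlcsNj : ∀ x : ↥Ht, x ∈ Subgroup.lowerCentralSeries (⊤ : Subgroup (↥Ht)) n → (x : G) ∈ Nj := by
    have h1 : Subgroup.lowerCentralSeries (⊤ : Subgroup (↥Ht)) n ≤ Subgroup.normalClosure (commSets X n) :=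
      lcs_le_normalClosure_commSets hXtop n
    have h2 : Subgroup.normalClosure (commSets X n) ≤ Subgroup.comap Ht.subtype Nj := by
      haveI : (Subgroup.comap Ht.subtype Nj).Normal := hNjnorm.comap Ht.subtype
      refine Subgroup.normalClosure_le_normal ?_
      intro x hx
      simp only [SetLike.mem_coe, Subgroup.mem_comap]
      exact hTNj ⟨x, hx, rfl⟩
    intro x hx
    have := h2 (h1 hx)
    rwa [Subgroup.mem_comap] at this
  -- build VN witness for G ⧸ Nj
  refine (hmem Nj hNjc).choose_spec ?_
  rw [VN_def]
  set ρ := QuotientGroup.mk' Nj with hρ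
  have hρs : Function.Surjective ρ := QuotientGroup.mk'_surjective Nj
  set Hj := Subgroup.map ρ Ht with hHj
  have hcomap : Subgroup.comap ρ Hj = Ht := by
    rw [hHj, Subgroup.comap_map_eq, QuotientGroup.ker_mk' Nj]
    exact sup_eq_left.mpr (le_trans (le_sSup hNjc) hker)
  refine ⟨Hj, ⟨?_⟩, ?_⟩
  · have := Subgroup.index_comap_of_surjective Hj hρs
    rw [hcomap] at this
    rw [← this]
    exact hHtfi.index_ne_zero
  · -- nilpotent: lcs Hj n = ⊥
    have hmemHj : ∀ x : ↥Ht, ρ (x : G) ∈ Hj := fun x => Subgroup.mem_map_of_mem ρ x.2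
    set ψj : ↥Ht →* ↥Hj := MonoidHom.codRestrict (ρ.comp Ht.subtype) Hj hmemHj with hψj
    have hψjs : Function.Surjective ψj := by
      rintro ⟨y, hy⟩
      obtain ⟨x, hx, hxy⟩ := hy
      exact ⟨⟨x, hx⟩, Subtype.ext hxy⟩
    rw [Subgroup.nilpotent_iff_lowerCentralSeries]
    refine ⟨n, ?_⟩
    rw [eq_bot_iff]
    refine le_trans (lcs_le_map_surjective hψjs n) ?_
    intro y hy
    rw [Subgroup.mem_map] at hy
    obtain ⟨x, hx, rfl⟩ := hy
    rw [Subgroup.mem_bot]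
    refine Subtype.ext ?_
    show ρ (x : G) = 1
    exact (QuotientGroup.eq_one_iff _).mpr (hlcsNj x hx)


lemma centralizer_finiteIndex_s19 {Q : Type*} [Group Q] {S : Set Q} (hfin : S.Finite)
    (hconj : ∀ x : Q, ∀ s ∈ S, x * s * x⁻¹ ∈ S) : (Subgroup.centralizer S).FiniteIndex := by
  haveI := hfin.to_subtype
  set C := Subgroup.centralizer S with hC
  let φ : Q → (S → S) := fun x s => ⟨x * s * x⁻¹, hconj x s s.2⟩
  have hwd : ∀ x y : Q, x⁻¹ * y ∈ C → φ x = φ y := by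
    intro x y hxy
    funext s
    refine Subtype.ext ?_
    show x * s * x⁻¹ = y * s * y⁻¹
    have h1 : (s : Q) * (x⁻¹ * y) = (x⁻¹ * y) * s :=
      Subgroup.mem_centralizer_iff.mp hxy s s.2
    have h2 : (x⁻¹ * y) * s * (x⁻¹ * y)⁻¹ = s := by rw [← h1]; group
    calc x * s * x⁻¹ = x * ((x⁻¹ * y) * s * (x⁻¹ * y)⁻¹) * x⁻¹ := by rw [h2]
      _ = y * s * y⁻¹ := by group
  have hwd' : ∀ x y : Q, (QuotientGroup.leftRel C) x y → φ x = φ y := by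
    intro x y hxy
    exact hwd x y (QuotientGroup.leftRel_apply.mp hxy)
  let f : Q ⧸ C → (S → S) := fun q => Quotient.liftOn' q φ hwd'
  have hinj : Function.Injective f := by
    intro q1 q2
    refine Quotient.inductionOn₂' q1 q2 ?_
    intro a b heq
    refine Quotient.sound' (QuotientGroup.leftRel_apply.mpr ?_)
    rw [Subgroup.mem_centralizer_iff]
    intro s hs
    have := congrFun heq ⟨s, hs⟩
    have h3 : a * s * a⁻¹ = b * s * b⁻¹ := congrArg Subtype.val this
    have : s * (a⁻¹ * b) = a⁻¹ * (a * s * a⁻¹) * b := by group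
    rw [h3] at this
    rw [this]; group
  haveI : Finite (Q ⧸ C) := Finite.of_injective f hinj
  exact Subgroup.finiteIndex_of_finite_quotient

/-- A finitely generated group that is not virtually nilpotent surjects onto a nontrivial
ICC group. -/
theorem fg_not_virtually_nilpotent_has_icc_quotient (G : Type u) [Group G]
    (hfg : Group.FG G) (h : ¬ ∃ N : Subgroup G, N.FiniteIndex ∧ Group.IsNilpotent N) :
    ∃ (J : Type u) (_ : Group J), Nontrivial J ∧
      ∃ τ : G →* J, Function.Surjective τ ∧ IsICC J := by
  classical
  haveI : Group.FG G := hfg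
  have hbot : BadN (⊥ : Subgroup G) := by
    refine ⟨inferInstance, ?_⟩
    intro hv
    exact h (VN_def.mp (VN.of_mulEquiv (QuotientGroup.quotientBot (G := G)) hv))
  obtain ⟨Nstar, -, hmax⟩ := zorn_le_nonempty₀ {N : Subgroup G | BadN N}
    (fun c hc hchain y hy =>
      ⟨sSup c, chain_ub_not_VN hchain ⟨y, hy⟩ (fun N hN => hc hN), fun z hz => le_sSup hz⟩)
    ⊥ hbot
  obtain ⟨hNnorm, hnVN⟩ := hmax.prop
  haveI := hNnorm
  set τ := QuotientGroup.mk' Nstar with hτ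
  have hτs : Function.Surjective τ := QuotientGroup.mk'_surjective Nstar
  -- nontrivial
  have hQnt : Nontrivial (G ⧸ Nstar) := by
    by_contra hnt
    haveI hsub : Subsingleton (G ⧸ Nstar) := not_nontrivial_iff_subsingleton.mp hnt
    refine hnVN (VN_def.mpr ⟨⊥, ⟨?_⟩, ?_⟩)
    · rw [Subgroup.index_bot]
      rw [Nat.card_eq_one_iff_unique.mpr ⟨hsub, ⟨1⟩⟩]
      exact one_ne_zero
    · infer_instance
  -- ICC
  have hicc : IsICC (G ⧸ Nstar) := by
    intro g hg
    by_contra hinf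
    rw [Set.not_infinite] at hinf
    set S := conjClassSet g with hSdef
    have hgS : g ∈ S := ⟨1, by group⟩
    have hconj : ∀ x : (G ⧸ Nstar), ∀ s ∈ S, x * s * x⁻¹ ∈ S := by
      rintro x s ⟨y, rfl⟩
      exact ⟨x * y, by group⟩
    haveI hCfi : (Subgroup.centralizer S).FiniteIndex := centralizer_finiteIndex_s19 hinf hconj
    set W := Subgroup.normalClosure S with hWdef
    haveI hWnorm : W.Normal := Subgroup.normalClosure_normal
    have hWclosure : W = Subgroup.closure S := by
      refine le_antisymm ?_ ((Subgroup.closure_le _).2 Subgroup.subset_normalClosure)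
      haveI : (Subgroup.closure S).Normal := by
        constructor
        intro w hw x
        refine Subgroup.closure_induction
          (p := fun w _ => x * w * x⁻¹ ∈ Subgroup.closure S) ?_ ?_ ?_ ?_ hw
        · exact fun s hs => Subgroup.subset_closure (hconj x s hs)
        · show x * 1 * x⁻¹ ∈ Subgroup.closure S
          have : x * 1 * x⁻¹ = (1 : G ⧸ Nstar) := by group
          rw [this]; exact (Subgroup.closure S).one_mem
        · intro p q _ _ hp hq
          show x * (p * q) * x⁻¹ ∈ Subgroup.closure S
          have : x * (p * q) * x⁻¹ = (x * p * x⁻¹) * (x * q * x⁻¹) := by group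
          rw [this]; exact mul_mem hp hq
        · intro p _ hp
          show x * p⁻¹ * x⁻¹ ∈ Subgroup.closure S
          have : x * p⁻¹ * x⁻¹ = (x * p * x⁻¹)⁻¹ := by group
          rw [this]; exact inv_mem hp
      exact Subgroup.normalClosure_le_normal Subgroup.subset_closure
    set M := Subgroup.comap τ W with hMdef
    haveI hMnorm : M.Normal := hWnorm.comap τ
    have hle : Nstar ≤ M := by
      intro x hx
      show τ x ∈ W
      have : τ x = 1 := (QuotientGroup.eq_one_iff x).mpr hx
      rw [this]; exact W.one_mem
    have hneq : Nstar ≠ M := by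
      obtain ⟨u, hu⟩ := hτs g
      intro heq
      have huM : u ∈ M := by
        show τ u ∈ W
        rw [hu]; exact Subgroup.subset_normalClosure hgS
      rw [← heq] at huM
      exact hg (by rw [← hu]; exact (QuotientGroup.eq_one_iff u).mpr huM)
    have hVNM : VN (G ⧸ M) := by
      by_contra hvn
      have hMs : M ∈ {N : Subgroup G | BadN N} := ⟨hMnorm, fun hv => hvn hv⟩
      exact hneq (le_antisymm hle (hmax.2 hMs hle))
    have hmapW : Subgroup.map τ M = W :=
      Subgroup.map_comap_eq_self_of_surjective hτs W
    have hVNQW : VN ((G ⧸ Nstar) ⧸ W) := by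
      haveI hmn : (Subgroup.map τ M).Normal := hmapW ▸ hWnorm
      have e := QuotientGroup.quotientQuotientEquivQuotient Nstar M hle
      have e2 := QuotientGroup.quotientMulEquivOfEq hmapW
      exact VN.of_mulEquiv (e.symm.trans e2) hVNM
    obtain ⟨H₁, h1fi, h1nil⟩ := VN_def.mp hVNQW
    set ρ := QuotientGroup.mk' W with hρ
    set K := Subgroup.comap ρ H₁ ⊓ Subgroup.centralizer S with hKdef
    haveI : (Subgroup.comap ρ H₁).FiniteIndex :=
      ⟨by rw [Subgroup.index_comap_of_surjective _ (QuotientGroup.mk'_surjective W)]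
          exact h1fi.index_ne_zero⟩
    haveI hKfi : K.FiniteIndex := by rw [hKdef]; infer_instance
    have hKnil : Group.IsNilpotent ↥K := by
      haveI := h1nil
      have hmem1 : ∀ x : ↥K, ρ (x : G ⧸ Nstar) ∈ H₁ := fun x => (Subgroup.mem_inf.mp x.2).1
      set χ : ↥K →* ↥H₁ := MonoidHom.codRestrict (ρ.comp K.subtype) H₁ hmem1 with hχ
      refine Subgroup.isNilpotent_of_ker_le_center χ ?_
      intro x hx
      have hxW : (x : G ⧸ Nstar) ∈ W := by
        rw [MonoidHom.mem_ker] at hx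
        have : ρ (x : G ⧸ Nstar) = 1 := congrArg Subtype.val hx
        exact (QuotientGroup.eq_one_iff _).mp this
      rw [Subgroup.mem_center_iff]
      intro y
      refine Subtype.ext ?_
      show (y : G ⧸ Nstar) * x = x * y
      have hyC : (y : G ⧸ Nstar) ∈ Subgroup.centralizer S := (Subgroup.mem_inf.mp y.2).2
      have hxcl : (x : G ⧸ Nstar) ∈ Subgroup.closure S := by
        rw [← hWclosure]; exact hxW
      have hxc : (x : G ⧸ Nstar) ∈ Subgroup.centralizer {(y : G ⧸ Nstar)} := by
        refine (Subgroup.closure_le _).2 ?_ hxcl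
        intro s hs
        rw [SetLike.mem_coe, Subgroup.mem_centralizer_iff]
        intro h' hh'
        rw [Set.mem_singleton_iff] at hh'
        subst hh'
        exact (Subgroup.mem_centralizer_iff.mp hyC s hs).symm
      exact Subgroup.mem_centralizer_iff.mp hxc _ rfl
    exact hnVN (VN_def.mpr ⟨K, hKfi, hKnil⟩)
  exact ⟨G ⧸ Nstar, inferInstance, hQnt, τ, hτs, hicc⟩
end
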